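/- arXiv:2210.14638 — 6 statements merged into one kernel-verified Lean document; each statement's English description precedes it below -/
import Mathlib

section
/- For every graph G and positive integer k, the k-improved graph G^⟨k⟩ is k-complemented; that is, for every pair of vertices x, y of G^⟨k⟩, if every separation (A,B) of G^⟨k⟩ with x ∈ A \ B and y ∈ B \ A has order greater than k, then xy is an edge of G^⟨k⟩. -/
open Finset

variable {V : Type*} [Fintype V] [DecidableEq V]

/-- A separation of a graph: a pair of vertex sets covering all vertices with no edge
between the two strict sides. Its order is `(A ∩ B).card`. -/
def IsSep (G : SimpleGraph V) (A B : Finset V) : Prop :=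
  A ∪ B = Finset.univ ∧
    ∀ a ∈ A, a ∉ B → ∀ b ∈ B, b ∉ A → ¬ G.Adj a b

/-- The `k`-improved graph `G^⟨k⟩`: `x` and `y` are adjacent iff they are distinct and no
separation of `G` of order at most `k` separates them (i.e. `μ_G(x,y) > k`). -/
def ImprovedGraph (G : SimpleGraph V) (k : ℕ) : SimpleGraph V where
  Adj x y := x ≠ y ∧ ∀ A B : Finset V, IsSep G A B → (A ∩ B).card ≤ k →
    ¬ ((x ∈ A ∧ x ∉ B ∧ y ∈ B ∧ y ∉ A) ∨ (y ∈ A ∧ y ∉ B ∧ x ∈ B ∧ x ∉ A))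
  symm := by
    constructor
    rintro x y ⟨hxy, h⟩
    exact ⟨hxy.symm, fun A B hs ho hc => h A B hs ho hc.symm⟩
  loopless := ⟨fun x h => h.1 rfl⟩

/-- `S` is `(q,k)`-unbreakable in `G`: every separation of order at most `k` has at most `q`
vertices of `S` on one of its sides. -/
def UnbreakableSet (G : SimpleGraph V) (S : Finset V) (q k : ℕ) : Prop :=
  ∀ A B : Finset V, IsSep G A B → (A ∩ B).card ≤ k →
    (A ∩ S).card ≤ q ∨ (B ∩ S).card ≤ q

/-- A clique separation: both strict sides nonempty and the separator is a clique. -/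
def IsCliqueSep (G : SimpleGraph V) (A B : Finset V) : Prop :=
  IsSep G A B ∧ (A \ B).Nonempty ∧ (B \ A).Nonempty ∧ G.IsClique (↑(A ∩ B) : Set V)

/-- `y` is reachable from `x` in `G − W`. -/
def AvoidReach (G : SimpleGraph V) (W : Finset V) (x y : V) : Prop :=
  ∃ p : G.Walk x y, ∀ v ∈ p.support, v ∉ W

/-- `W` is an `X`-`Y` separator: no vertex of `Y \ W` is reachable from `X \ W` in `G − W`. -/
def IsSepSet (G : SimpleGraph V) (W X Y : Finset V) : Prop :=
  ∀ x ∈ X, ∀ y ∈ Y, ¬ AvoidReach G W x y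

/-- `R_{G−W}(X \ W)`: the set of vertices reachable from `X \ W` in `G − W`. -/
def ReachSet (G : SimpleGraph V) (W X : Finset V) : Set V :=
  {y | ∃ x ∈ X, AvoidReach G W x y}

/-- An important `X`-`Y` separator. -/
def IsImpSep (G : SimpleGraph V) (X Y W : Finset V) : Prop :=
  IsSepSet G W X Y ∧
  (∀ W' ⊆ W, W' ≠ W → ¬ IsSepSet G W' X Y) ∧
  ∀ W' : Finset V, IsSepSet G W' X Y → W'.card ≤ W.card →
    ¬ (ReachSet G W X ⊂ ReachSet G W' X)

/-- A `k`-important `X`-`Y` separator. -/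
def IsKImpSep (G : SimpleGraph V) (k : ℕ) (X Y W : Finset V) : Prop :=
  IsImpSep G X Y W ∧ W.card ≤ k ∧
  ∀ W' : Finset V, IsImpSep G X Y W' → W'.card ≤ k → W' ≠ W →
    ¬ (ReachSet G W X ⊆ ReachSet G W' X)

/-- The `k`-important separator extension of `D`. -/
def KImpExt (G : SimpleGraph V) (D : Finset V) (k : ℕ) : Set V :=
  {u | (∃ v, v ≠ u ∧ ∃ S : Finset V, IsKImpSep G k {v} D S ∧ u ∈ S) ∨
       (({u} : Finset V).card ≤ k ∧ IsSepSet G {u} {u} D ∧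
        ∀ S : Finset V, IsSepSet G S {u} D → S.card ≤ k → S = {u})}

/-- `C` is (the vertex set of) a connected component of `G − A`. -/
def IsCompAvoiding (G : SimpleGraph V) (A : Set V) (C : Set V) : Prop :=
  ∃ x, x ∉ A ∧ C = {y | ∃ p : G.Walk x y, ∀ v ∈ p.support, v ∉ A}

/-- `C` is (the vertex set of) a connected component of the induced subgraph `G[S]`. -/
def IsCompWithin (G : SimpleGraph V) (S : Set V) (C : Set V) : Prop :=
  ∃ x ∈ S, C = {y | ∃ p : G.Walk x y, ∀ v ∈ p.support, v ∈ S}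

/-- The (open) neighborhood of a vertex set `C` in `G`. -/
def nbhdSet (G : SimpleGraph V) (C : Set V) : Set V :=
  {v | v ∉ C ∧ ∃ c ∈ C, G.Adj v c}

/-- A connectivity-sensitive star decomposition of `G`, given by its central bag and its
set of leaf bags. -/
structure ConnSensStar (G : SimpleGraph V) where
  center : Finset V
  leaves : Finset (Finset V)
  cover : ∀ v : V, v ∈ center ∨ ∃ L ∈ leaves, v ∈ L
  edges : ∀ x y : V, G.Adj x y →
    (x ∈ center ∧ y ∈ center) ∨ ∃ L ∈ leaves, x ∈ L ∧ y ∈ L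
  inter : ∀ L ∈ leaves, ∀ L' ∈ leaves, L ≠ L' → ∀ v ∈ L, v ∈ L' → v ∈ center
  adh_distinct : ∀ L ∈ leaves, ∀ L' ∈ leaves, L ∩ center = L' ∩ center → L = L'
  comp_nbhd : ∀ L ∈ leaves, ∀ C : Set V,
    IsCompWithin G ((↑L : Set V) \ (↑center : Set V)) C → nbhdSet G C = ↑(L ∩ center)

/-- `(A,B)` is an `S`-stable separation of `G`. -/
def IsStableSep (G : SimpleGraph V) (S : Finset V) (A B : Finset V) : Prop :=
  IsSep G A B ∧ ∃ SL SR : Finset V, SL ∪ SR = S ∧ SL ∩ SR = ∅ ∧ SL ⊆ A ∧ SR ⊆ B ∧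
    ∀ A' B' : Finset V, IsSep G A' B' → SL ⊆ A' → SR ⊆ B' → (A ∩ B).card ≤ (A' ∩ B').card

/-- A `Λ`-boundaried graph: a graph together with an injective partial assignment of
labels to (boundary) vertices. -/
structure BGraph (Λ : Type*) (V : Type*) where
  G : SimpleGraph V
  bd : Λ → Option V
  inj : ∀ l l' v, bd l = some v → bd l' = some v → l = l'

/-- `K` (with embeddings `f₁`, `f₂`) is the gluing `H₁ ⊕ H₂` of two boundaried graphs:
vertices of equal label are identified, and an edge is present iff it is present in
(at least) one of the two graphs. -/
def IsGluing {Λ V₁ V₂ W : Type*} (H₁ : BGraph Λ V₁) (H₂ : BGraph Λ V₂)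
    (K : SimpleGraph W) (f₁ : V₁ → W) (f₂ : V₂ → W) : Prop :=
  Function.Injective f₁ ∧ Function.Injective f₂ ∧
  (∀ w : W, (∃ a, f₁ a = w) ∨ (∃ b, f₂ b = w)) ∧
  (∀ a b, f₁ a = f₂ b ↔ ∃ l, H₁.bd l = some a ∧ H₂.bd l = some b) ∧
  (∀ x y : W, K.Adj x y ↔
    (∃ a b, f₁ a = x ∧ f₁ b = y ∧ H₁.G.Adj a b) ∨
    (∃ a b, f₂ a = x ∧ f₂ b = y ∧ H₂.G.Adj a b))

/-- The weak cut signature value of the boundaried graph `H` at `(A', B')` is at most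
`n − |A' ∩ B'|`: there is a separation of order at most `n` whose sides contain the
boundary vertices labeled by `A'` and `B'`, respectively. -/
def WeakSigLE {Λ : Type*} {V : Type*} [Fintype V] [DecidableEq V]
    (H : BGraph Λ V) (A' B' : Finset Λ) (n : ℕ) : Prop :=
  ∃ A B : Finset V, IsSep H.G A B ∧
    (∀ l ∈ A', ∀ v, H.bd l = some v → v ∈ A) ∧
    (∀ l ∈ B', ∀ v, H.bd l = some v → v ∈ B) ∧ (A ∩ B).card ≤ n

/-- Two `Λ`-boundaried graphs have the same weak cut signature. -/
def SameWeakSig {Λ : Type*} [Fintype Λ] [DecidableEq Λ] {V₁ V₂ : Type*}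
    [Fintype V₁] [DecidableEq V₁] [Fintype V₂] [DecidableEq V₂]
    (H₁ : BGraph Λ V₁) (H₂ : BGraph Λ V₂) : Prop :=
  ∀ A' B' : Finset Λ, A' ∪ B' = Finset.univ →
    ∀ n : ℕ, WeakSigLE H₁ A' B' n ↔ WeakSigLE H₂ A' B' n

/-- For every graph `G` and positive integer `k`, the `k`-improved graph
`G^⟨k⟩` is `k`-complemented: if every separation `(A,B)` of `G^⟨k⟩` with `x ∈ A \ B` and
`y ∈ B \ A` has order greater than `k`, then `xy` is an edge of `G^⟨k⟩`. -/
theorem improved_graph_k_complemented (G : SimpleGraph V) (k : ℕ) (hk : 0 < k)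
    (x y : V) (hxy : x ≠ y)
    (h : ∀ A B : Finset V, IsSep (ImprovedGraph G k) A B →
      x ∈ A → x ∉ B → y ∈ B → y ∉ A → k < (A ∩ B).card) :
    (ImprovedGraph G k).Adj x y := by
  refine ⟨hxy, fun A B hs hc hsep => ?_⟩
  have himp : IsSep (ImprovedGraph G k) A B := by
    refine ⟨hs.1, fun a ha haB b hb hbA hadj => ?_⟩
    exact hadj.2 A B hs hc (Or.inl ⟨ha, haB, hb, hbA⟩)
  have himp' : IsSep (ImprovedGraph G k) B A := by
    refine ⟨by rw [Finset.union_comm]; exact himp.1, fun a ha haB b hb hbA hadj => ?_⟩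
    exact (himp.2 b hb hbA a ha haB hadj.symm)
  rcases hsep with ⟨h1,h2,h3,h4⟩|⟨h1,h2,h3,h4⟩
  · exact absurd hc (not_le.mpr (h A B himp h1 h2 h3 h4))
  · have := h B A himp' h3 h4 h1 h2
    rw [Finset.inter_comm] at this
    exact absurd hc (not_le.mpr this)
end

section
/- Let G be a graph, k a positive integer, and (A,B) a separation of G with A ∩ B = ∅ possible; then (A,B) is a separation of order at most k in G if and only if (A,B) is a separation of order at most k in the k-improved graph G^⟨k⟩. Consequently, for any vertex set S ⊆ V(G) and integer q, S is (q,k)-unbreakable in G^⟨k⟩ if and only if S is (q,k)-unbreakable in G. -/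
open Finset

variable {V : Type*} [Fintype V] [DecidableEq V]

/-- a pair `(A,B)` is a separation of order at most `k` in `G` iff it is a
separation of order at most `k` in the `k`-improved graph `G^⟨k⟩`; consequently, a set
`S` is `(q,k)`-unbreakable in `G^⟨k⟩` iff it is `(q,k)`-unbreakable in `G`. -/
theorem improved_graph_separations_and_unbreakability (G : SimpleGraph V) (k : ℕ)
    (hk : 0 < k) :
    (∀ A B : Finset V,
      (IsSep G A B ∧ (A ∩ B).card ≤ k) ↔ (IsSep (ImprovedGraph G k) A B ∧ (A ∩ B).card ≤ k)) ∧
    (∀ S : Finset V, ∀ q : ℕ,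
      UnbreakableSet (ImprovedGraph G k) S q k ↔ UnbreakableSet G S q k) := by
  have hsub : ∀ a b, G.Adj a b → (ImprovedGraph G k).Adj a b := by
    intro a b hab
    refine ⟨hab.ne, fun A B hs ho hc => ?_⟩
    rcases hc with ⟨ha, ha', hb, hb'⟩ | ⟨hb, hb', ha, ha'⟩
    · exact hs.2 a ha ha' b hb hb' hab
    · exact hs.2 b hb hb' a ha ha' hab.symm
  have key : ∀ A B : Finset V,
      (IsSep G A B ∧ (A ∩ B).card ≤ k) ↔
        (IsSep (ImprovedGraph G k) A B ∧ (A ∩ B).card ≤ k) := by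
    intro A B
    constructor
    · rintro ⟨hs, hc⟩
      refine ⟨⟨hs.1, fun a ha ha' b hb hb' hadj => ?_⟩, hc⟩
      exact hadj.2 A B hs hc (Or.inl ⟨ha, ha', hb, hb'⟩)
    · rintro ⟨hs, hc⟩
      exact ⟨⟨hs.1, fun a ha ha' b hb hb' hab =>
        hs.2 a ha ha' b hb hb' (hsub a b hab)⟩, hc⟩
  refine ⟨key, fun S q => ?_⟩
  constructor
  · intro h A B hs hc
    exact h A B ((key A B).mp ⟨hs, hc⟩).1 hc
  · intro h A B hs hc
    exact h A B ((key A B).mpr ⟨hs, hc⟩).1 hc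
end

section
/- For any two sets X, Y of vertices in a graph G and any integer k, there are at most 4^k important X-Y separators of size at most k in G. -/
open Finset

variable {V : Type*} [Fintype V] [DecidableEq V]

section ImpSepAux

attribute [local instance] Classical.propDecidable
set_option linter.unusedSectionVars false

open SimpleGraph.Walk

/-- Neighborhood of a finset. -/
noncomputable def nbrF (G : SimpleGraph V) (Z : Finset V) : Finset V :=
  Finset.univ.filter fun v => v ∉ Z ∧ ∃ c ∈ Z, G.Adj v c

/-- Reach finset: vertices reachable from `A` avoiding `W`. -/
noncomputable def reachF (G : SimpleGraph V) (W A : Finset V) : Finset V :=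
  Finset.univ.filter fun y => ∃ x ∈ A, AvoidReach G W x y

variable {G : SimpleGraph V}

lemma mem_nbrF {Z : Finset V} {v : V} :
    v ∈ nbrF G Z ↔ v ∉ Z ∧ ∃ c ∈ Z, G.Adj v c := by simp [nbrF]

lemma mem_reachF {W A : Finset V} {y : V} :
    y ∈ reachF G W A ↔ ∃ x ∈ A, AvoidReach G W x y := by simp [reachF]

lemma reachSet_eq (W A : Finset V) : ReachSet G W A = ↑(reachF G W A) := by
  ext y; simp [ReachSet, mem_reachF]

lemma walk_confine {Z : Finset V} : ∀ {a y : V} (p : G.Walk a y),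
    a ∈ Z → (∀ v ∈ p.support, v ∉ nbrF G Z) → ∀ v ∈ p.support, v ∈ Z := by
  intro a y p
  induction p with
  | nil =>
    intro ha _ v hv
    rw [support_nil, List.mem_singleton] at hv; subst hv; exact ha
  | @cons a b y h q ih =>
    intro ha hp v hv
    have hb : b ∈ Z := by
      by_contra hbZ
      exact hp b (by rw [support_cons]; exact List.mem_cons_of_mem _ q.start_mem_support)
        (mem_nbrF.2 ⟨hbZ, a, ha, h.symm⟩)
    rw [support_cons, List.mem_cons] at hv
    rcases hv with rfl | hv
    · exact ha
    · exact ih hb (fun u hu => hp u (by rw [support_cons]; exact List.mem_cons_of_mem _ hu)) v hv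

lemma avoid_support {W : Finset V} : ∀ {x y : V} (p : G.Walk x y),
    (∀ v ∈ p.support, v ∉ W) → ∀ v ∈ p.support, AvoidReach G W x v := by
  intro x y p
  induction p with
  | nil =>
    intro hp v hv
    rw [support_nil, List.mem_singleton] at hv; subst hv
    exact ⟨SimpleGraph.Walk.nil, hp⟩
  | @cons a b y h q ih =>
    intro hp v hv
    rw [support_cons, List.mem_cons] at hv
    rcases hv with rfl | hv
    · refine ⟨SimpleGraph.Walk.nil, ?_⟩
      intro u hu; rw [support_nil, List.mem_singleton] at hu; subst hu
      exact hp _ (by rw [support_cons]; exact List.mem_cons_self)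
    · obtain ⟨r, hr⟩ := ih (fun u hu => hp u
        (by rw [support_cons]; exact List.mem_cons_of_mem _ hu)) v hv
      refine ⟨SimpleGraph.Walk.cons h r, ?_⟩
      intro u hu
      rw [support_cons, List.mem_cons] at hu
      rcases hu with rfl | hu
      · exact hp u (by rw [support_cons]; exact List.mem_cons_self)
      · exact hr u hu

lemma avoidReach_trans {W : Finset V} {x y z : V}
    (h1 : AvoidReach G W x y) (h2 : AvoidReach G W y z) : AvoidReach G W x z := by
  obtain ⟨p, hp⟩ := h1; obtain ⟨q, hq⟩ := h2
  refine ⟨p.append q, ?_⟩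
  intro v hv
  rcases (mem_support_append_iff p q).1 hv with h | h
  · exact hp v h
  · exact hq v h

lemma avoidReach_step {W : Finset V} {x c v : V}
    (h1 : AvoidReach G W x c) (ha : G.Adj v c) (hv : v ∉ W) : AvoidReach G W x v := by
  refine avoidReach_trans h1 ⟨SimpleGraph.Walk.cons ha.symm SimpleGraph.Walk.nil, ?_⟩
  intro u hu
  rw [support_cons, support_nil, List.mem_cons, List.mem_singleton] at hu
  rcases hu with rfl | rfl
  · obtain ⟨p, hp⟩ := h1; exact hp _ p.end_mem_support
  · exact hv

lemma reachF_mono {W A A' : Finset V} (h : A ⊆ A') : reachF G W A ⊆ reachF G W A' := by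
  intro y hy
  obtain ⟨x, hx, hr⟩ := mem_reachF.1 hy
  exact mem_reachF.2 ⟨x, h hx, hr⟩

lemma reachF_not_mem_W {W A : Finset V} {y : V} (h : y ∈ reachF G W A) : y ∉ W := by
  obtain ⟨x, _, p, hp⟩ := mem_reachF.1 h
  exact hp y p.end_mem_support

lemma source_mem_reachF {W A : Finset V} {x : V} (hx : x ∈ A) (hw : x ∉ W) :
    x ∈ reachF G W A := by
  refine mem_reachF.2 ⟨x, hx, SimpleGraph.Walk.nil, ?_⟩
  intro u hu; rw [support_nil, List.mem_singleton] at hu; subst hu; exact hw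

lemma reachF_step {W A : Finset V} {c v : V} (hc : c ∈ reachF G W A)
    (ha : G.Adj v c) (hv : v ∉ W) : v ∈ reachF G W A := by
  obtain ⟨x, hx, hr⟩ := mem_reachF.1 hc
  exact mem_reachF.2 ⟨x, hx, avoidReach_step hr ha hv⟩

lemma avoid_support_sub_reachF {W A : Finset V} {x y : V} (hx : x ∈ A)
    (p : G.Walk x y) (hp : ∀ v ∈ p.support, v ∉ W) : ∀ v ∈ p.support, v ∈ reachF G W A :=
  fun v hv => mem_reachF.2 ⟨x, hx, avoid_support p hp v hv⟩

end ImpSepAux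
section ImpSepAux2
attribute [local instance] Classical.propDecidable
set_option linter.unusedSectionVars false
open SimpleGraph.Walk

/-- Boundary of `Z`: its neighborhood, plus sources outside `Z`, plus the forced set `F`. -/
noncomputable def bndF (G : SimpleGraph V) (X F P Z : Finset V) : Finset V :=
  nbrF G Z ∪ ((X ∪ P) \ Z) ∪ F

def validZ (Y F P Z : Finset V) : Prop := Z ∩ Y = ∅ ∧ Z ∩ F = ∅ ∧ P ⊆ Z

noncomputable def lamF (G : SimpleGraph V) (X Y F P : Finset V) : ℕ :=
  sInf {n | ∃ Z : Finset V, validZ Y F P Z ∧ (bndF G X F P Z).card = n}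

noncomputable def clF (G : SimpleGraph V) (X F P Z : Finset V) : Finset V :=
  reachF G (bndF G X F P Z) (X ∪ P)

variable {G : SimpleGraph V}

lemma mem_bndF {X F P Z : Finset V} {v : V} :
    v ∈ bndF G X F P Z ↔ v ∈ nbrF G Z ∨ v ∈ (X ∪ P) \ Z ∨ v ∈ F := by
  simp [bndF, Finset.mem_union, or_assoc]

lemma notmem_of_inter_empty {Z F : Finset V} (h : Z ∩ F = ∅) {v : V} (hv : v ∈ F) :
    v ∉ Z := fun hz => (Finset.eq_empty_iff_forall_notMem.1 h v) (Finset.mem_inter.2 ⟨hz, hv⟩)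

lemma F_sub_bndF {X F P Z : Finset V} : F ⊆ bndF G X F P Z := by
  intro v hv; exact mem_bndF.2 (Or.inr (Or.inr hv))

lemma bndF_disj {X F P Z : Finset V} (hF : Z ∩ F = ∅) {v : V}
    (hv : v ∈ bndF G X F P Z) : v ∉ Z := by
  rcases mem_bndF.1 hv with h | h | h
  · exact (mem_nbrF.1 h).1
  · exact (Finset.mem_sdiff.1 h).2
  · exact notmem_of_inter_empty hF h

lemma sep_of_bndF {X Y F P Z : Finset V} (hZY : Z ∩ Y = ∅) :
    IsSepSet G (bndF G X F P Z) X Y := by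
  rintro x hx y hy ⟨p, hp⟩
  have hxB : x ∉ bndF G X F P Z := hp x p.start_mem_support
  have hxZ : x ∈ Z := by
    by_contra hxZ
    exact hxB (mem_bndF.2 (Or.inr (Or.inl (Finset.mem_sdiff.2
      ⟨Finset.mem_union_left _ hx, hxZ⟩))))
  have hy' : y ∈ Z := walk_confine p hxZ
    (fun v hv hvn => hp v hv (mem_bndF.2 (Or.inl hvn))) y p.end_mem_support
  exact (Finset.eq_empty_iff_forall_notMem.1 hZY y) (Finset.mem_inter.2 ⟨hy', hy⟩)

lemma reach_bndF_sub {X F P Z : Finset V} : reachF G (bndF G X F P Z) (X ∪ P) ⊆ Z := by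
  intro y hy
  obtain ⟨x, hx, p, hp⟩ := mem_reachF.1 hy
  have hxZ : x ∈ Z := by
    by_contra hxZ
    exact hp x p.start_mem_support (mem_bndF.2 (Or.inr (Or.inl (Finset.mem_sdiff.2 ⟨hx, hxZ⟩))))
  exact walk_confine p hxZ (fun v hv hvn => hp v hv (mem_bndF.2 (Or.inl hvn))) y p.end_mem_support

lemma bndF_reach_sub {X F P W : Finset V} (hF : F ⊆ W) :
    bndF G X F P (reachF G W (X ∪ P)) ⊆ W := by
  intro v hv
  rcases mem_bndF.1 hv with h | h | h
  · obtain ⟨hvR, c, hc, hadj⟩ := mem_nbrF.1 h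
    by_contra hvW
    exact hvR (reachF_step hc hadj hvW)
  · obtain ⟨hXP, hvR⟩ := Finset.mem_sdiff.1 h
    by_contra hvW
    exact hvR (source_mem_reachF hXP hvW)
  · exact hF h

lemma reachF_inter_F_empty {X F P W : Finset V} (hF : F ⊆ W) :
    reachF G W (X ∪ P) ∩ F = ∅ := by
  rw [Finset.eq_empty_iff_forall_notMem]
  intro u hu
  obtain ⟨h1, h2⟩ := Finset.mem_inter.1 hu
  exact reachF_not_mem_W h1 (hF h2)

lemma reach_closed {X F P W : Finset V} (hF : F ⊆ W) :
    clF G X F P (reachF G W (X ∪ P)) = reachF G W (X ∪ P) := by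
  apply Finset.Subset.antisymm reach_bndF_sub
  intro y hy
  obtain ⟨x, hx, p, hp⟩ := mem_reachF.1 hy
  have hsup := avoid_support_sub_reachF hx p hp
  refine mem_reachF.2 ⟨x, hx, p, ?_⟩
  intro v hv hvB
  exact bndF_disj (reachF_inter_F_empty hF) hvB (hsup v hv)

lemma isSepSet_mono {W W' X Y : Finset V} (h : W ⊆ W') (hs : IsSepSet G W X Y) :
    IsSepSet G W' X Y := by
  rintro x hx y hy ⟨p, hp⟩
  exact hs x hx y hy ⟨p, fun v hv hvW => hp v hv (h hvW)⟩

lemma reach_union_P {W X P : Finset V} (h : ∀ p ∈ P, p ∈ reachF G W X) :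
    reachF G W (X ∪ P) = reachF G W X := by
  apply Finset.Subset.antisymm _ (reachF_mono Finset.subset_union_left)
  intro y hy
  obtain ⟨x', hx', hr⟩ := mem_reachF.1 hy
  rcases Finset.mem_union.1 hx' with hX | hP
  · exact mem_reachF.2 ⟨x', hX, hr⟩
  · obtain ⟨x, hx, hr2⟩ := mem_reachF.1 (h x' hP)
    exact mem_reachF.2 ⟨x, hx, avoidReach_trans hr2 hr⟩

lemma validZ_clF {X Y F P Z : Finset V} (hZ : validZ Y F P Z) :
    validZ Y F P (clF G X F P Z) := by
  obtain ⟨hY, hF, hP⟩ := hZ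
  refine ⟨?_, ?_, ?_⟩
  · rw [Finset.eq_empty_iff_forall_notMem]
    intro u hu
    obtain ⟨h1, h2⟩ := Finset.mem_inter.1 hu
    exact (Finset.eq_empty_iff_forall_notMem.1 hY u)
      (Finset.mem_inter.2 ⟨reach_bndF_sub h1, h2⟩)
  · exact reachF_inter_F_empty F_sub_bndF
  · intro p hp
    exact source_mem_reachF (Finset.mem_union_right _ hp)
      (fun hB => bndF_disj hF hB (hP hp))

lemma card_bndF_clF {X F P Z : Finset V} :
    (bndF G X F P (clF G X F P Z)).card ≤ (bndF G X F P Z).card :=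
  Finset.card_le_card (bndF_reach_sub F_sub_bndF)

lemma clF_closed {X F P Z : Finset V} :
    clF G X F P (clF G X F P Z) = clF G X F P Z :=
  reach_closed F_sub_bndF

lemma closed_sub_clF {X F P Z1 Z' : Finset V} (h1 : clF G X F P Z1 = Z1)
    (h12 : Z1 ⊆ Z') (hF' : Z' ∩ F = ∅) : Z1 ⊆ clF G X F P Z' := by
  intro y hy
  rw [← h1] at hy
  obtain ⟨x, hx, p, hp⟩ := mem_reachF.1 hy
  have hsup : ∀ v ∈ p.support, v ∈ Z1 := by
    intro v hv
    have := avoid_support_sub_reachF hx p hp v hv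
    rwa [show reachF G (bndF G X F P Z1) (X ∪ P) = Z1 from h1] at this
  refine mem_reachF.2 ⟨x, hx, p, ?_⟩
  intro v hv hvB
  exact bndF_disj hF' hvB (h12 (hsup v hv))

lemma bndF_union_sub {X F P Z1 Z2 : Finset V} :
    bndF G X F P (Z1 ∪ Z2) ⊆ bndF G X F P Z1 ∪ bndF G X F P Z2 := by
  intro v hv
  rcases mem_bndF.1 hv with h | h | h
  · obtain ⟨hvZ, c, hc, hadj⟩ := mem_nbrF.1 h
    have h1 : v ∉ Z1 := fun hh => hvZ (Finset.mem_union_left _ hh)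
    have h2 : v ∉ Z2 := fun hh => hvZ (Finset.mem_union_right _ hh)
    rcases Finset.mem_union.1 hc with hc1 | hc2
    · exact Finset.mem_union_left _ (mem_bndF.2 (Or.inl (mem_nbrF.2 ⟨h1, c, hc1, hadj⟩)))
    · exact Finset.mem_union_right _ (mem_bndF.2 (Or.inl (mem_nbrF.2 ⟨h2, c, hc2, hadj⟩)))
  · obtain ⟨hXP, hvZ⟩ := Finset.mem_sdiff.1 h
    have h1 : v ∉ Z1 := fun hh => hvZ (Finset.mem_union_left _ hh)
    exact Finset.mem_union_left _ (mem_bndF.2 (Or.inr (Or.inl (Finset.mem_sdiff.2 ⟨hXP, h1⟩))))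
  · exact Finset.mem_union_left _ (mem_bndF.2 (Or.inr (Or.inr h)))

lemma bndF_inter_sub {X F P Z1 Z2 : Finset V} :
    bndF G X F P (Z1 ∩ Z2) ⊆ bndF G X F P Z1 ∪ bndF G X F P Z2 := by
  intro v hv
  rcases mem_bndF.1 hv with h | h | h
  · obtain ⟨hvZ, c, hc, hadj⟩ := mem_nbrF.1 h
    obtain ⟨hc1, hc2⟩ := Finset.mem_inter.1 hc
    by_cases h1 : v ∈ Z1
    · have h2 : v ∉ Z2 := fun hh => hvZ (Finset.mem_inter.2 ⟨h1, hh⟩)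
      exact Finset.mem_union_right _ (mem_bndF.2 (Or.inl (mem_nbrF.2 ⟨h2, c, hc2, hadj⟩)))
    · exact Finset.mem_union_left _ (mem_bndF.2 (Or.inl (mem_nbrF.2 ⟨h1, c, hc1, hadj⟩)))
  · obtain ⟨hXP, hvZ⟩ := Finset.mem_sdiff.1 h
    by_cases h1 : v ∈ Z1
    · have h2 : v ∉ Z2 := fun hh => hvZ (Finset.mem_inter.2 ⟨h1, hh⟩)
      exact Finset.mem_union_right _ (mem_bndF.2 (Or.inr (Or.inl (Finset.mem_sdiff.2 ⟨hXP, h2⟩))))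
    · exact Finset.mem_union_left _ (mem_bndF.2 (Or.inr (Or.inl (Finset.mem_sdiff.2 ⟨hXP, h1⟩))))
  · exact Finset.mem_union_left _ (mem_bndF.2 (Or.inr (Or.inr h)))

lemma bndF_inter_both {X F P Z1 Z2 : Finset V} :
    bndF G X F P (Z1 ∪ Z2) ∩ bndF G X F P (Z1 ∩ Z2) ⊆
      bndF G X F P Z1 ∩ bndF G X F P Z2 := by
  intro v hv
  obtain ⟨hu, hi⟩ := Finset.mem_inter.1 hv
  by_cases hF : v ∈ F
  · exact Finset.mem_inter.2 ⟨F_sub_bndF hF, F_sub_bndF hF⟩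
  have hnZ : v ∉ Z1 ∧ v ∉ Z2 := by
    rcases mem_bndF.1 hu with h | h | h
    · have hvZ := (mem_nbrF.1 h).1
      exact ⟨fun hh => hvZ (Finset.mem_union_left _ hh),
        fun hh => hvZ (Finset.mem_union_right _ hh)⟩
    · have hvZ := (Finset.mem_sdiff.1 h).2
      exact ⟨fun hh => hvZ (Finset.mem_union_left _ hh),
        fun hh => hvZ (Finset.mem_union_right _ hh)⟩
    · exact absurd h hF
  rcases mem_bndF.1 hi with h | h | h
  · obtain ⟨_, c, hc, hadj⟩ := mem_nbrF.1 h
    obtain ⟨hc1, hc2⟩ := Finset.mem_inter.1 hc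
    exact Finset.mem_inter.2 ⟨mem_bndF.2 (Or.inl (mem_nbrF.2 ⟨hnZ.1, c, hc1, hadj⟩)),
      mem_bndF.2 (Or.inl (mem_nbrF.2 ⟨hnZ.2, c, hc2, hadj⟩))⟩
  · have hXP := (Finset.mem_sdiff.1 h).1
    exact Finset.mem_inter.2
      ⟨mem_bndF.2 (Or.inr (Or.inl (Finset.mem_sdiff.2 ⟨hXP, hnZ.1⟩))),
       mem_bndF.2 (Or.inr (Or.inl (Finset.mem_sdiff.2 ⟨hXP, hnZ.2⟩)))⟩
  · exact absurd h hF

lemma bndF_submod {X F P Z1 Z2 : Finset V} :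
    (bndF G X F P (Z1 ∪ Z2)).card + (bndF G X F P (Z1 ∩ Z2)).card ≤
      (bndF G X F P Z1).card + (bndF G X F P Z2).card := by
  rw [← Finset.card_union_add_card_inter, ← Finset.card_union_add_card_inter (bndF G X F P Z1)]
  exact Nat.add_le_add
    (Finset.card_le_card (Finset.union_subset bndF_union_sub bndF_inter_sub))
    (Finset.card_le_card bndF_inter_both)

end ImpSepAux2
section ImpSepMain
attribute [local instance] Classical.propDecidable
set_option linter.unusedSectionVars false
open SimpleGraph.Walk

/-- Important separators of size at most `k` containing `F` whose reach contains `P`. -/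
def countedSet (G : SimpleGraph V) (X Y : Finset V) (k : ℕ) (F P : Finset V) :
    Set (Finset V) :=
  {W | IsImpSep G X Y W ∧ W.card ≤ k ∧ F ⊆ W ∧ ∀ p ∈ P, p ∈ reachF G W X}

variable {G : SimpleGraph V}

lemma validZ_union {Y F P Z1 Z2 : Finset V} (h1 : validZ Y F P Z1)
    (h2 : validZ Y F P Z2) : validZ Y F P (Z1 ∪ Z2) := by
  refine ⟨?_, ?_, h1.2.2.trans Finset.subset_union_left⟩
  · rw [Finset.union_inter_distrib_right, h1.1, h2.1, Finset.union_empty]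
  · rw [Finset.union_inter_distrib_right, h1.2.1, h2.2.1, Finset.union_empty]

lemma validZ_inter {Y F P Z1 Z2 : Finset V} (h1 : validZ Y F P Z1)
    (h2 : validZ Y F P Z2) : validZ Y F P (Z1 ∩ Z2) := by
  refine ⟨?_, ?_, Finset.subset_inter h1.2.2 h2.2.2⟩
  · rw [← Finset.subset_empty, ← h1.1]
    exact Finset.inter_subset_inter_right (Finset.inter_subset_left)
  · rw [← Finset.subset_empty, ← h1.2.1]
    exact Finset.inter_subset_inter_right (Finset.inter_subset_left)

lemma lamF_le {X Y F P Z : Finset V} (h : validZ Y F P Z) :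
    lamF G X Y F P ≤ (bndF G X F P Z).card := Nat.sInf_le ⟨Z, h, rfl⟩

lemma counted_facts {X Y F P W : Finset V} {k : ℕ} (hW : W ∈ countedSet G X Y k F P) :
    validZ Y F P (reachF G W X) ∧ bndF G X F P (reachF G W X) ⊆ W ∧
      reachF G W (X ∪ P) = reachF G W X := by
  obtain ⟨himp, hk, hF, hP⟩ := hW
  have hXP : reachF G W (X ∪ P) = reachF G W X := reach_union_P hP
  refine ⟨⟨?_, ?_, hP⟩, ?_, hXP⟩
  · rw [Finset.eq_empty_iff_forall_notMem]
    intro y hy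
    obtain ⟨hy1, hy2⟩ := Finset.mem_inter.1 hy
    obtain ⟨x, hx, hr⟩ := mem_reachF.1 hy1
    exact himp.1 x hx y hy2 hr
  · rw [← hXP]; exact reachF_inter_F_empty hF
  · rw [← hXP]; exact bndF_reach_sub hF

lemma key_reach {X Y F P Zs W : Finset V} {k : ℕ}
    (hZv : validZ Y F P Zs) (hZc : clF G X F P Zs = Zs)
    (hZcard : (bndF G X F P Zs).card = lamF G X Y F P)
    (hW : W ∈ countedSet G X Y k F P) : Zs ⊆ reachF G W X := by
  obtain ⟨hvalid, hsub, hXP⟩ := counted_facts hW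
  obtain ⟨himp, hk, hFW, hP⟩ := hW
  have hZ'v : validZ Y F P (reachF G W X ∪ Zs) := validZ_union hvalid hZv
  have hZiv : validZ Y F P (reachF G W X ∩ Zs) := validZ_inter hvalid hZv
  have hle : (bndF G X F P (reachF G W X ∪ Zs)).card ≤ (bndF G X F P (reachF G W X)).card := by
    have hs := bndF_submod (G := G) (X := X) (F := F) (P := P) (Z1 := reachF G W X) (Z2 := Zs)
    have h1 := lamF_le (G := G) (X := X) hZiv
    rw [hZcard] at hs
    omega
  have hcard' : (bndF G X F P (reachF G W X ∪ Zs)).card ≤ W.card :=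
    le_trans hle (Finset.card_le_card hsub)
  have hsep' : IsSepSet G (bndF G X F P (reachF G W X ∪ Zs)) X Y := sep_of_bndF hZ'v.1
  have hRsub : ∀ y ∈ reachF G W X, y ∈ reachF G (bndF G X F P (reachF G W X ∪ Zs)) X := by
    intro y hy
    obtain ⟨x, hx, p, hp⟩ := mem_reachF.1 hy
    have hsup : ∀ v ∈ p.support, v ∈ reachF G W X := avoid_support_sub_reachF hx p hp
    exact mem_reachF.2 ⟨x, hx, p, fun v hv hvB =>
      bndF_disj hZ'v.2.1 hvB (Finset.mem_union_left _ (hsup v hv))⟩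
  have hPW' : ∀ p ∈ P, p ∈ reachF G (bndF G X F P (reachF G W X ∪ Zs)) X :=
    fun p hp' => hRsub p (hP p hp')
  have hXP' : reachF G (bndF G X F P (reachF G W X ∪ Zs)) (X ∪ P) =
      reachF G (bndF G X F P (reachF G W X ∪ Zs)) X := reach_union_P hPW'
  have hZs_sub : Zs ⊆ clF G X F P (reachF G W X ∪ Zs) :=
    closed_sub_clF hZc Finset.subset_union_right hZ'v.2.1
  have hmem : ∀ z ∈ Zs, z ∈ reachF G (bndF G X F P (reachF G W X ∪ Zs)) X := by
    intro z hz
    have h1 := hZs_sub hz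
    rw [clF, hXP'] at h1
    exact h1
  have hss : ¬ (ReachSet G W X ⊂ ReachSet G (bndF G X F P (reachF G W X ∪ Zs)) X) :=
    himp.2.2 _ hsep' hcard'
  have hsub2 : ReachSet G W X ⊆ ReachSet G (bndF G X F P (reachF G W X ∪ Zs)) X := by
    rw [reachSet_eq, reachSet_eq]
    intro y hy
    exact hRsub y hy
  have heq : ReachSet G W X = ReachSet G (bndF G X F P (reachF G W X ∪ Zs)) X := by
    by_contra hne
    exact hss (ssubset_iff_subset_ne.2 ⟨hsub2, hne⟩)
  have hfeq : reachF G (bndF G X F P (reachF G W X ∪ Zs)) X = reachF G W X := by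
    have h2 : (reachF G (bndF G X F P (reachF G W X ∪ Zs)) X : Set V) =
        (reachF G W X : Set V) := by
      rw [← reachSet_eq, ← reachSet_eq, heq]
    exact_mod_cast h2
  intro z hz
  rw [← hfeq]
  exact hmem z hz

end ImpSepMain
section ImpSepCount2
attribute [local instance] Classical.propDecidable
set_option linter.unusedSectionVars false

variable {G : SimpleGraph V}

lemma counted_lam_le {X Y F P W : Finset V} {k : ℕ} (hW : W ∈ countedSet G X Y k F P) :
    lamF G X Y F P ≤ W.card ∧ F.card ≤ W.card ∧ W.card ≤ k := by
  obtain ⟨hvalid, hsub, _⟩ := counted_facts hW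
  exact ⟨le_trans (lamF_le hvalid) (Finset.card_le_card hsub),
    Finset.card_le_card hW.2.2.1, hW.2.1⟩

lemma bndF_mono_F {X F F' P Z : Finset V} (h : F ⊆ F') :
    bndF G X F P Z ⊆ bndF G X F' P Z := by
  intro u hu
  rcases mem_bndF.1 hu with h1 | h1 | h1
  · exact mem_bndF.2 (Or.inl h1)
  · exact mem_bndF.2 (Or.inr (Or.inl h1))
  · exact mem_bndF.2 (Or.inr (Or.inr (h h1)))

lemma bndF_insert_P {X F P Z : Finset V} {v : V} (hv : v ∈ Z) :
    bndF G X F (insert v P) Z = bndF G X F P Z := by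
  unfold bndF
  congr 1
  congr 1
  ext u
  simp only [Finset.mem_sdiff, Finset.mem_union, Finset.mem_insert]
  constructor
  · rintro ⟨h1 | (rfl | h1), h2⟩
    · exact ⟨Or.inl h1, h2⟩
    · exact absurd hv h2
    · exact ⟨Or.inr h1, h2⟩
  · rintro ⟨h1 | h1, h2⟩
    · exact ⟨Or.inl h1, h2⟩
    · exact ⟨Or.inr (Or.inr h1), h2⟩

lemma main_ind (G : SimpleGraph V) (X Y : Finset V) (k : ℕ) :
    ∀ μ : ℕ, ∀ F P : Finset V,
      2 * k + 1 - (lamF G X Y F P + F.card) ≤ μ →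
      (countedSet G X Y k F P).ncard ≤ 2 ^ (2 * k - (lamF G X Y F P + F.card)) := by
  intro μ
  induction μ with
  | zero =>
    intro F P hμ
    have hempty : countedSet G X Y k F P = ∅ := by
      rw [Set.eq_empty_iff_forall_notMem]
      intro W hW
      obtain ⟨h1, h2, h3⟩ := counted_lam_le hW
      omega
    rw [hempty, Set.ncard_empty]
    exact Nat.zero_le _
  | succ μ ih =>
    intro F P hμ
    by_cases hne : (countedSet G X Y k F P).Nonempty
    case neg =>
      rw [Set.not_nonempty_iff_eq_empty.1 hne, Set.ncard_empty]
      exact Nat.zero_le _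
    obtain ⟨W0, hW0⟩ := hne
    obtain ⟨hlam0, hF0, hk0⟩ := counted_lam_le hW0
    have hlamk : lamF G X Y F P ≤ k := le_trans hlam0 hk0
    have hFk : F.card ≤ k := le_trans hF0 hk0
    have hSne : {n | ∃ Z : Finset V, validZ Y F P Z ∧ (bndF G X F P Z).card = n}.Nonempty :=
      ⟨(bndF G X F P (reachF G W0 X)).card, reachF G W0 X, (counted_facts hW0).1, rfl⟩
    obtain ⟨Z0, hZ0v, hZ0c0⟩ := Nat.sInf_mem hSne
    have hZ0c : (bndF G X F P Z0).card = lamF G X Y F P := hZ0c0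
    have hFlam : F.card ≤ lamF G X Y F P := by
      rw [show lamF G X Y F P = (bndF G X F P Z0).card from hZ0c.symm]
      exact Finset.card_le_card F_sub_bndF
    by_cases hcase : lamF G X Y F P = F.card
    · -- degenerate case : F itself is a separator
      have hbndF : F = bndF G X F P Z0 := by
        apply Finset.eq_of_subset_of_card_le F_sub_bndF
        rw [hZ0c, hcase]
      have hFsep : IsSepSet G F X Y := by
        rw [hbndF]
        exact sep_of_bndF hZ0v.1
      have hsub : countedSet G X Y k F P ⊆ {F} := by
        intro W hW
        simp only [Set.mem_singleton_iff]
        by_contra hne'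
        exact hW.1.2.1 F hW.2.2.1 (fun h => hne' h.symm) hFsep
      refine le_trans (Set.ncard_le_ncard hsub (Set.finite_singleton F)) ?_
      rw [Set.ncard_singleton]
      exact Nat.one_le_two_pow
    · have hlamgt : F.card < lamF G X Y F P := lt_of_le_of_ne hFlam (Ne.symm hcase)
      set T := Finset.univ.filter (fun Z : Finset V => validZ Y F P Z ∧
        clF G X F P Z = Z ∧ (bndF G X F P Z).card = lamF G X Y F P) with hT
      have hTne : T.Nonempty := by
        refine ⟨clF G X F P Z0, ?_⟩
        rw [hT, Finset.mem_filter]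
        refine ⟨Finset.mem_univ _, validZ_clF hZ0v, clF_closed, le_antisymm ?_ ?_⟩
        · rw [show lamF G X Y F P = (bndF G X F P Z0).card from hZ0c.symm]
          exact card_bndF_clF
        · exact lamF_le (validZ_clF hZ0v)
      obtain ⟨Zs, hZsT, hZsmax⟩ := T.exists_max_image Finset.card hTne
      rw [hT, Finset.mem_filter] at hZsT
      obtain ⟨_, hZsv, hZsc, hZscard⟩ := hZsT
      have hTmax : ∀ Z ∈ T, Z ⊆ Zs := by
        intro Z hZ
        by_contra hns
        have hZv := (Finset.mem_filter.1 (hT ▸ hZ)).2.1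
        have hZc := (Finset.mem_filter.1 (hT ▸ hZ)).2.2.1
        have hZcard := (Finset.mem_filter.1 (hT ▸ hZ)).2.2.2
        have hUv : validZ Y F P (Z ∪ Zs) := validZ_union hZv hZsv
        have hmem : Z ∪ Zs ∈ T := by
          rw [hT, Finset.mem_filter]
          refine ⟨Finset.mem_univ _, hUv, ?_, ?_⟩
          · apply Finset.Subset.antisymm reach_bndF_sub
            exact Finset.union_subset
              (closed_sub_clF hZc Finset.subset_union_left hUv.2.1)
              (closed_sub_clF hZsc Finset.subset_union_right hUv.2.1)
          · apply le_antisymm _ (lamF_le hUv)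
            have hs := bndF_submod (G := G) (X := X) (F := F) (P := P) (Z1 := Z) (Z2 := Zs)
            have h1 := lamF_le (G := G) (X := X) (validZ_inter hZv hZsv)
            omega
        have hlt : Zs.card < (Z ∪ Zs).card := by
          apply Finset.card_lt_card
          rw [Finset.ssubset_def]
          exact ⟨Finset.subset_union_right,
            fun h => hns (Finset.subset_union_left.trans h)⟩
        exact absurd (hZsmax _ hmem) (not_le.2 hlt)
      have hvex : ∃ v ∈ bndF G X F P Zs, v ∉ F := by
        by_contra h
        push_neg at h
        have := Finset.card_le_card h
        omega
      obtain ⟨v, hvB, hvF⟩ := hvex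
      have hvZs : v ∉ Zs := bndF_disj hZsv.2.1 hvB
      have hvP : v ∉ P := fun h => hvZs (hZsv.2.2 h)
      have hsplit : countedSet G X Y k F P ⊆
          countedSet G X Y k (insert v F) P ∪ countedSet G X Y k F (insert v P) := by
        intro W hW
        by_cases hvW : v ∈ W
        · exact Or.inl ⟨hW.1, hW.2.1, Finset.insert_subset hvW hW.2.2.1, hW.2.2.2⟩
        · refine Or.inr ⟨hW.1, hW.2.1, hW.2.2.1, ?_⟩
          intro p hp
          rcases Finset.mem_insert.1 hp with rfl | hp
          · rcases mem_bndF.1 hvB with h | h | h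
            · obtain ⟨_, c, hc, hadj⟩ := mem_nbrF.1 h
              exact reachF_step (key_reach hZsv hZsc hZscard hW hc) hadj hvW
            · obtain ⟨hXP, _⟩ := Finset.mem_sdiff.1 h
              rcases Finset.mem_union.1 hXP with hX | hP'
              · exact source_mem_reachF hX hvW
              · exact hW.2.2.2 _ hP'
            · exact absurd h hvF
          · exact hW.2.2.2 p hp
      have hb1 : (countedSet G X Y k (insert v F) P).ncard ≤
          2 ^ (2 * k - (lamF G X Y F P + F.card) - 1) := by
        by_cases h1 : (countedSet G X Y k (insert v F) P).Nonempty
        · obtain ⟨W1, hW1⟩ := h1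
          have hS1ne : {n | ∃ Z : Finset V, validZ Y (insert v F) P Z ∧
              (bndF G X (insert v F) P Z).card = n}.Nonempty :=
            ⟨_, reachF G W1 X, (counted_facts hW1).1, rfl⟩
          have hlam1 : lamF G X Y F P ≤ lamF G X Y (insert v F) P := by
            apply le_csInf hS1ne
            rintro n ⟨Z, hZv1, rfl⟩
            have hZv' : validZ Y F P Z := by
              refine ⟨hZv1.1, ?_, hZv1.2.2⟩
              rw [← Finset.subset_empty, ← hZv1.2.1]
              exact Finset.inter_subset_inter (Finset.Subset.refl _) (Finset.subset_insert _ _)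
            exact le_trans (lamF_le hZv')
              (Finset.card_le_card (bndF_mono_F (Finset.subset_insert _ _)))
          have hcard1 : (insert v F).card = F.card + 1 := Finset.card_insert_of_notMem hvF
          have happ := ih (insert v F) P (by rw [hcard1]; omega)
          rw [hcard1] at happ
          refine le_trans happ ?_
          exact Nat.pow_le_pow_right (by norm_num) (by omega)
        · rw [Set.not_nonempty_iff_eq_empty.1 h1, Set.ncard_empty]
          exact Nat.zero_le _
      have hb2 : (countedSet G X Y k F (insert v P)).ncard ≤
          2 ^ (2 * k - (lamF G X Y F P + F.card) - 1) := by
        by_cases h2 : (countedSet G X Y k F (insert v P)).Nonempty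
        · obtain ⟨W2, hW2⟩ := h2
          have hS2ne : {n | ∃ Z : Finset V, validZ Y F (insert v P) Z ∧
              (bndF G X F (insert v P) Z).card = n}.Nonempty :=
            ⟨_, reachF G W2 X, (counted_facts hW2).1, rfl⟩
          have hlam2 : lamF G X Y F P + 1 ≤ lamF G X Y F (insert v P) := by
            apply le_csInf hS2ne
            rintro n ⟨Z, hZv2, rfl⟩
            have hvZ : v ∈ Z := hZv2.2.2 (Finset.mem_insert_self _ _)
            have hZv' : validZ Y F P Z :=
              ⟨hZv2.1, hZv2.2.1, (Finset.subset_insert _ _).trans hZv2.2.2⟩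
            rw [bndF_insert_P hvZ]
            by_contra hlt
            push_neg at hlt
            have hZcard : (bndF G X F P Z).card = lamF G X Y F P :=
              le_antisymm (by omega) (lamF_le hZv')
            have hUv : validZ Y F P (Z ∪ Zs) := validZ_union hZv' hZsv
            have hUcard : (bndF G X F P (Z ∪ Zs)).card = lamF G X Y F P := by
              apply le_antisymm _ (lamF_le hUv)
              have hs := bndF_submod (G := G) (X := X) (F := F) (P := P) (Z1 := Z) (Z2 := Zs)
              have h1 := lamF_le (G := G) (X := X) (validZ_inter hZv' hZsv)
              omega
            have hclT : clF G X F P (Z ∪ Zs) ∈ T := by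
              rw [hT, Finset.mem_filter]
              exact ⟨Finset.mem_univ _, validZ_clF hUv, clF_closed,
                le_antisymm (le_trans card_bndF_clF (le_of_eq hUcard))
                  (lamF_le (validZ_clF hUv))⟩
            have hclsub : clF G X F P (Z ∪ Zs) ⊆ Zs := hTmax _ hclT
            have hvnotB : v ∉ bndF G X F P (Z ∪ Zs) :=
              fun h => bndF_disj hUv.2.1 h (Finset.mem_union_left _ hvZ)
            have hvcl : v ∈ clF G X F P (Z ∪ Zs) := by
              rcases mem_bndF.1 hvB with h | h | h
              · obtain ⟨_, c, hc, hadj⟩ := mem_nbrF.1 h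
                have hZs_cl : Zs ⊆ clF G X F P (Z ∪ Zs) :=
                  closed_sub_clF hZsc Finset.subset_union_right hUv.2.1
                exact reachF_step (hZs_cl hc) hadj hvnotB
              · obtain ⟨hXP, _⟩ := Finset.mem_sdiff.1 h
                exact source_mem_reachF hXP hvnotB
              · exact absurd h hvF
            exact hvZs (hclsub hvcl)
          have happ := ih F (insert v P) (by omega)
          refine le_trans happ ?_
          exact Nat.pow_le_pow_right (by norm_num) (by omega)
        · rw [Set.not_nonempty_iff_eq_empty.1 h2, Set.ncard_empty]
          exact Nat.zero_le _
      have hunion := Set.ncard_union_le (countedSet G X Y k (insert v F) P)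
        (countedSet G X Y k F (insert v P))
      have hmono := Set.ncard_le_ncard hsplit (Set.toFinite _)
      have hge1 : 1 ≤ 2 * k - (lamF G X Y F P + F.card) := by omega
      have hpow : 2 ^ (2 * k - (lamF G X Y F P + F.card) - 1) +
          2 ^ (2 * k - (lamF G X Y F P + F.card) - 1) =
          2 ^ (2 * k - (lamF G X Y F P + F.card)) := by
        rw [← two_mul, ← pow_succ']
        congr 1
        omega
      omega

end ImpSepCount2

/-- for any two vertex sets `X`, `Y` and any `k`, there are at most `4^k`
important `X`-`Y` separators of size at most `k`. -/
theorem impSep_count (G : SimpleGraph V) (X Y : Finset V) (k : ℕ) :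
    {W : Finset V | IsImpSep G X Y W ∧ W.card ≤ k}.ncard ≤ 4 ^ k := by
  have h := main_ind G X Y k (2 * k + 1) ∅ ∅ (Nat.sub_le _ _)
  have hset : {W : Finset V | IsImpSep G X Y W ∧ W.card ≤ k} = countedSet G X Y k ∅ ∅ := by
    ext W
    simp [countedSet]
  rw [hset]
  refine le_trans h ?_
  have h4 : (4 : ℕ) ^ k = 2 ^ (2 * k) := by
    rw [show (4 : ℕ) = 2 ^ 2 from rfl, ← pow_mul]
  rw [h4]
  exact Nat.pow_le_pow_right (by norm_num) (by omega)
end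

section
/- Let t₂ be a positive integer and q₁ : ℕ → ℕ, q₂ : [t₂] → ℕ be non-decreasing functions with 1 + q₁(1) ≤ t₂. Let G be a graph, D a q₁-unbreakable vertex set in G (i.e., (q₁(i),i)-unbreakable for every i in the domain), and A a vertex set that is q₂-unbreakability-tied to D. Then A is q₃-unbreakable, where q₃(i) = q₂(i + q₁(i)) and the domain of q₃ is [t₃] with t₃ the largest integer j such that j + q₁(j) ≤ t₂. -/
open Finset

variable {V : Type*} [Fintype V] [DecidableEq V]

/-- if `D` is `q₁`-unbreakable in `G` and `A` is `q₂`-unbreakability-tied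
to `D` (with `q₂` defined on `[t₂]`), then `A` is `q₃`-unbreakable, where
`q₃(i) = q₂(i + q₁(i))` on `[t₃]`, `t₃` being the largest `j` with `j + q₁(j) ≤ t₂`. -/
theorem tied_plus_unbreakable_gives_unbreakable (G : SimpleGraph V) (t₂ t₃ : ℕ)
    (q₁ q₂ : ℕ → ℕ) (hq₁ : Monotone q₁) (hq₂ : Monotone q₂) (ht₂ : 1 + q₁ 1 ≤ t₂)
    (ht₃ : t₃ + q₁ t₃ ≤ t₂ ∧ ∀ j : ℕ, j + q₁ j ≤ t₂ → j ≤ t₃)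
    (D A : Finset V)
    (hD : ∀ L R : Finset V, IsSep G L R →
      (L ∩ D).card ≤ q₁ (L ∩ R).card ∨ (R ∩ D).card ≤ q₁ (L ∩ R).card)
    (hA : ∀ L R : Finset V, IsSep G L R → 1 ≤ (L ∩ R).card → (L ∩ R).card ≤ t₂ →
      D ⊆ R → (L ∩ A).card ≤ q₂ (L ∩ R).card) :
    ∀ L R : Finset V, IsSep G L R → 1 ≤ (L ∩ R).card → (L ∩ R).card ≤ t₃ →
      (L ∩ A).card ≤ q₂ ((L ∩ R).card + q₁ (L ∩ R).card) ∨
      (R ∩ A).card ≤ q₂ ((L ∩ R).card + q₁ (L ∩ R).card) := by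
  have key : ∀ L R : Finset V, IsSep G L R → 1 ≤ (L ∩ R).card → (L ∩ R).card ≤ t₃ →
      (L ∩ D).card ≤ q₁ (L ∩ R).card →
      (L ∩ A).card ≤ q₂ ((L ∩ R).card + q₁ (L ∩ R).card) := by
    intro L R hsep h1 h3 hLD
    set R' : Finset V := R ∪ (L ∩ D) with hR'
    have hsep' : IsSep G L R' := by
      constructor
      · rw [hR', ← union_assoc, hsep.1, Finset.union_eq_left.2 (subset_univ _)]
      · intro a haL haR' b hbR' hbL
        have hbR : b ∈ R := by
          rcases mem_union.1 hbR' with h | h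
          · exact h
          · exact absurd (mem_of_mem_inter_left h) hbL
        exact hsep.2 a haL (fun h => haR' (mem_union_left _ h)) b hbR hbL
    have hLR' : L ∩ R' = (L ∩ R) ∪ (L ∩ D) := by
      rw [hR', inter_union_distrib_left]
      congr 1
      rw [← inter_assoc, inter_self]
    have hcard_le : (L ∩ R').card ≤ (L ∩ R).card + q₁ (L ∩ R).card := by
      rw [hLR']
      exact le_trans (card_union_le _ _) (Nat.add_le_add_left hLD _)
    have hcard_ge : 1 ≤ (L ∩ R').card := by
      refine le_trans h1 (card_le_card ?_)
      rw [hLR']; exact subset_union_left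
    have hle_t₂ : (L ∩ R').card ≤ t₂ := by
      refine le_trans hcard_le (le_trans ?_ ht₃.1)
      exact Nat.add_le_add h3 (hq₁ h3)
    have hDsub : D ⊆ R' := by
      intro v hv
      by_cases hvL : v ∈ L
      · exact mem_union_right _ (mem_inter.2 ⟨hvL, hv⟩)
      · refine mem_union_left _ ?_
        have := mem_univ v
        rw [← hsep.1, mem_union] at this
        tauto
    calc (L ∩ A).card ≤ q₂ (L ∩ R').card := hA L R' hsep' hcard_ge hle_t₂ hDsub
      _ ≤ q₂ ((L ∩ R).card + q₁ (L ∩ R).card) := hq₂ hcard_le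
  intro L R hsep h1 h3
  have hsep2 : IsSep G R L := ⟨by rw [union_comm, hsep.1],
    fun a ha ha' b hb hb' hadj => hsep.2 b hb hb' a ha ha' hadj.symm⟩
  have hcomm : (R ∩ L).card = (L ∩ R).card := by rw [inter_comm]
  rcases hD L R hsep with h | h
  · exact Or.inl (key L R hsep h1 h3 h)
  · refine Or.inr ?_
    have := key R L hsep2 (by rwa [hcomm]) (by rwa [hcomm]) (by rwa [hcomm])
    rwa [hcomm] at this
end

section
/- Let G be a graph and S ⊆ V(G). Let 𝒮 be a finite family of S-stable separations of G, and define X := S ∪ ⋃_{(A,B) ∈ 𝒮} (A ∩ B). Then for every connected component of G − X with vertex set Z, we have |N(Z)| ≤ |S|. -/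
open Finset

variable {V : Type*} [Fintype V] [DecidableEq V]

section AuxStable

variable {G : SimpleGraph V}

lemma isSep_symm {A B : Finset V} (h : IsSep G A B) : IsSep G B A := by
  obtain ⟨h1, h2⟩ := h
  refine ⟨by rw [Finset.union_comm]; exact h1, ?_⟩
  intro a ha haA b hb hbB hadj
  exact h2 b hb hbB a ha haA hadj.symm

lemma sep_univ (D : Finset V) : IsSep G Finset.univ D := by
  refine ⟨by simp, ?_⟩
  intro a _ _ b _ hb
  exact absurd (Finset.mem_univ b) hb

lemma sep_mem_or {A B : Finset V} (h : IsSep G A B) (v : V) : v ∈ A ∨ v ∈ B := by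
  have hv : v ∈ A ∪ B := by rw [h.1]; exact Finset.mem_univ v
  exact Finset.mem_union.mp hv

lemma sep_corner1 {C D A B : Finset V} (h1 : IsSep G C D) (h2 : IsSep G A B) :
    IsSep G (C ∩ A) (D ∪ B) := by
  constructor
  · apply Finset.eq_univ_iff_forall.mpr
    intro v
    rcases sep_mem_or h1 v with hv | hv
    · rcases sep_mem_or h2 v with hw | hw
      · simp [hv, hw]
      · simp [hw]
    · simp [hv]
  · intro a ha haD b hb hbC hadj
    simp only [Finset.mem_inter] at ha
    simp only [Finset.mem_union, not_or] at haD
    simp only [Finset.mem_union] at hb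
    simp only [Finset.mem_inter, not_and_or] at hbC
    rcases hb with hbD | hbB
    · by_cases hbC' : b ∈ C
      · have hbA : b ∉ A := by tauto
        have hbB' : b ∈ B := (sep_mem_or h2 b).resolve_left hbA
        exact h2.2 a ha.2 haD.2 b hbB' hbA hadj
      · exact h1.2 a ha.1 haD.1 b hbD hbC' hadj
    · by_cases hbA : b ∈ A
      · have hbC' : b ∉ C := by tauto
        have hbD : b ∈ D := (sep_mem_or h1 b).resolve_left hbC'
        exact h1.2 a ha.1 haD.1 b hbD hbC' hadj
      · exact h2.2 a ha.2 haD.2 b hbB hbA hadj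

lemma sep_corner2 {C D A B : Finset V} (h1 : IsSep G C D) (h2 : IsSep G A B) :
    IsSep G (C ∪ A) (D ∩ B) := by
  constructor
  · apply Finset.eq_univ_iff_forall.mpr
    intro v
    rcases sep_mem_or h1 v with hv | hv
    · simp [hv]
    · rcases sep_mem_or h2 v with hw | hw
      · simp [hw]
      · simp [hv, hw]
  · intro a ha haDB b hb hbCA hadj
    simp only [Finset.mem_union] at ha
    simp only [Finset.mem_inter, not_and_or] at haDB
    simp only [Finset.mem_inter] at hb
    simp only [Finset.mem_union, not_or] at hbCA
    rcases ha with haC | haA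
    · by_cases haD : a ∈ D
      · have haB : a ∉ B := by tauto
        have haA : a ∈ A := (sep_mem_or h2 a).resolve_right haB
        exact h2.2 a haA haB b hb.2 hbCA.2 hadj
      · exact h1.2 a haC haD b hb.1 hbCA.1 hadj
    · by_cases haB : a ∈ B
      · have haD : a ∉ D := by tauto
        have haC : a ∈ C := (sep_mem_or h1 a).resolve_right haD
        exact h1.2 a haC haD b hb.1 hbCA.1 hadj
      · exact h2.2 a haA haB b hb.2 hbCA.2 hadj

lemma sep_submod (C D A B : Finset V) :
    ((C ∩ A) ∩ (D ∪ B)).card + ((C ∪ A) ∩ (D ∩ B)).card ≤ (C ∩ D).card + (A ∩ B).card := by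
  have h1 : ((C ∩ A) ∩ (D ∪ B)) ∪ ((C ∪ A) ∩ (D ∩ B)) ⊆ (C ∩ D) ∪ (A ∩ B) := by
    intro v hv
    simp only [Finset.mem_union, Finset.mem_inter] at hv ⊢
    tauto
  have h2 : ((C ∩ A) ∩ (D ∪ B)) ∩ ((C ∪ A) ∩ (D ∩ B)) ⊆ (C ∩ D) ∩ (A ∩ B) := by
    intro v hv
    simp only [Finset.mem_union, Finset.mem_inter] at hv ⊢
    tauto
  calc ((C ∩ A) ∩ (D ∪ B)).card + ((C ∪ A) ∩ (D ∩ B)).card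
      = (((C ∩ A) ∩ (D ∪ B)) ∪ ((C ∪ A) ∩ (D ∩ B))).card
        + (((C ∩ A) ∩ (D ∪ B)) ∩ ((C ∪ A) ∩ (D ∩ B))).card :=
      (Finset.card_union_add_card_inter _ _).symm
    _ ≤ ((C ∩ D) ∪ (A ∩ B)).card + ((C ∩ D) ∩ (A ∩ B)).card :=
      Nat.add_le_add (Finset.card_le_card h1) (Finset.card_le_card h2)
    _ = (C ∩ D).card + (A ∩ B).card := Finset.card_union_add_card_inter _ _

lemma walk_stay {A B : Finset V} (h : IsSep G A B) :
    ∀ {x y : V} (p : G.Walk x y), (∀ v ∈ p.support, v ∉ A ∩ B) → x ∈ A → y ∈ A := by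
  intro x y p
  induction p with
  | nil => exact fun _ hx => hx
  | @cons u w y hadj q ih =>
    intro hav hx
    have hxB : u ∉ B := fun hB =>
      hav u (SimpleGraph.Walk.start_mem_support _) (Finset.mem_inter.mpr ⟨hx, hB⟩)
    have hw : w ∈ A := by
      by_contra hwA
      have hwB : w ∈ B := (sep_mem_or h w).resolve_left hwA
      exact h.2 u hx hxB w hwB hwA hadj
    exact ih (fun v hv => hav v (by simp [SimpleGraph.Walk.support_cons, hv])) hw

lemma build_sep {ι : Type*} [DecidableEq ι]
    (A B L R : ι → Finset V) (N : Finset V) (𝒯 : Finset ι) :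
    (∀ i ∈ 𝒯, IsSep G (A i) (B i) ∧ L i ⊆ A i ∧ R i ⊆ B i ∧
      (∀ A' B' : Finset V, IsSep G A' B' → L i ⊆ A' → R i ⊆ B' →
        (A i ∩ B i).card ≤ (A' ∩ B').card) ∧ N ⊆ A i) →
    ∀ C D : Finset V, IsSep G C D → (∀ i ∈ 𝒯, R i ⊆ D) → N ⊆ C →
    ∃ C' D', IsSep G C' D' ∧ N ⊆ C' ∧ D ⊆ D' ∧ (∀ i ∈ 𝒯, B i ⊆ D') ∧
      (C' ∩ D').card ≤ (C ∩ D).card := by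
  induction 𝒯 using Finset.induction_on with
  | empty =>
    intro _ C D hCD _ hNC
    exact ⟨C, D, hCD, hNC, subset_rfl, fun i hi => absurd hi (by simp), le_rfl⟩
  | @insert a s ha ih =>
    intro h C D hCD hRD hNC
    obtain ⟨hsep, hLA, hRB, hmin, hNA⟩ := h a (Finset.mem_insert_self a s)
    have hC1 : IsSep G (C ∩ A a) (D ∪ B a) := sep_corner1 hCD hsep
    have hC2 : IsSep G (C ∪ A a) (D ∩ B a) := sep_corner2 hCD hsep
    have hst : (A a ∩ B a).card ≤ ((C ∪ A a) ∩ (D ∩ B a)).card :=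
      hmin _ _ hC2 (hLA.trans Finset.subset_union_right)
        (Finset.subset_inter (hRD a (Finset.mem_insert_self a s)) hRB)
    have hsub := sep_submod C D (A a) (B a)
    have hord : ((C ∩ A a) ∩ (D ∪ B a)).card ≤ (C ∩ D).card := by omega
    obtain ⟨C', D', h1, h2, h3, h4, h5⟩ :=
      ih (fun i hi => h i (Finset.mem_insert_of_mem hi)) (C ∩ A a) (D ∪ B a) hC1
        (fun i hi => (hRD i (Finset.mem_insert_of_mem hi)).trans Finset.subset_union_left)
        (Finset.subset_inter hNC hNA)
    refine ⟨C', D', h1, h2, Finset.subset_union_left.trans h3, ?_, h5.trans hord⟩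
    intro i hi
    rcases Finset.mem_insert.mp hi with rfl | hi'
    · exact Finset.subset_union_right.trans h3
    · exact h4 i hi'

end AuxStable

/-- if `𝒮` is a finite family of `S`-stable separations and
`X = S ∪ ⋃_{(A,B) ∈ 𝒮} (A ∩ B)`, then every connected component `Z` of `G − X`
satisfies `|N(Z)| ≤ |S|`. -/
theorem stable_seps_component_nbhd (G : SimpleGraph V) (S : Finset V)
    (𝒮 : Finset (Finset V × Finset V)) (h𝒮 : ∀ p ∈ 𝒮, IsStableSep G S p.1 p.2)
    (Z : Set V)
    (hZ : IsCompAvoiding G (↑(S ∪ 𝒮.sup fun p => p.1 ∩ p.2) : Set V) Z) :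
    (nbhdSet G Z).ncard ≤ S.card := by
  classical
  obtain ⟨x, hxX, hZdef⟩ := hZ
  set X : Finset V := S ∪ 𝒮.sup (fun p => p.1 ∩ p.2) with hXdef
  have hxX' : x ∉ X := by simpa using hxX
  have hZmem : ∀ z, z ∈ Z ↔ ∃ p : G.Walk x z, ∀ v ∈ p.support, v ∉ X := by
    intro z
    rw [hZdef]
    simp only [Set.mem_setOf_eq, Finset.mem_coe]
  have hZnX : ∀ z ∈ Z, z ∉ X := by
    intro z hz
    obtain ⟨p, hp⟩ := (hZmem z).mp hz
    exact hp z p.end_mem_support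
  have hNX : ∀ v ∈ nbhdSet G Z, v ∈ X := by
    intro v hv
    obtain ⟨hvZ, c, hc, hadj⟩ := hv
    by_contra hvX
    obtain ⟨p, hp⟩ := (hZmem c).mp hc
    refine hvZ ((hZmem v).mpr
      ⟨p.append (SimpleGraph.Walk.cons hadj.symm SimpleGraph.Walk.nil), ?_⟩)
    intro u hu
    rw [SimpleGraph.Walk.support_append] at hu
    rcases List.mem_append.mp hu with h | h
    · exact hp u h
    · simp only [SimpleGraph.Walk.support_cons, SimpleGraph.Walk.support_nil,
        List.tail_cons, List.mem_singleton] at h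
      subst h
      exact hvX
  have key : ∀ i : {p : Finset V × Finset V // p ∈ 𝒮}, ∃ A B L R : Finset V,
      IsSep G A B ∧ L ∪ R = S ∧ L ⊆ A ∧ R ⊆ B ∧
      (∀ A' B' : Finset V, IsSep G A' B' → L ⊆ A' → R ⊆ B' →
        (A ∩ B).card ≤ (A' ∩ B').card) ∧
      A ∩ B = i.1.1 ∩ i.1.2 ∧ (∀ v ∈ nbhdSet G Z, v ∈ A) := by
    rintro ⟨p, hp⟩
    obtain ⟨hsep, SL, SR, hU, hdis, hLA, hRB, hmin⟩ := h𝒮 p hp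
    have hsepX : p.1 ∩ p.2 ⊆ X :=
      (Finset.le_sup (f := fun p : Finset V × Finset V => p.1 ∩ p.2) hp).trans
        Finset.subset_union_right
    by_cases hx1 : x ∈ p.1
    · have hZ1 : ∀ z ∈ Z, z ∈ p.1 := by
        intro z hz
        obtain ⟨w, hw⟩ := (hZmem z).mp hz
        exact walk_stay hsep w (fun v hv hmem => (hw v hv) (hsepX hmem)) hx1
      have hN1 : ∀ v ∈ nbhdSet G Z, v ∈ p.1 := by
        intro v hv
        obtain ⟨hvZ, c, hc, hadj⟩ := hv
        by_contra hv1
        have hv2 : v ∈ p.2 := (sep_mem_or hsep v).resolve_left hv1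
        have hc1 : c ∈ p.1 := hZ1 c hc
        have hc2 : c ∉ p.2 := fun h2 =>
          hZnX c hc (hsepX (Finset.mem_inter.mpr ⟨hc1, h2⟩))
        exact hsep.2 c hc1 hc2 v hv2 hv1 hadj.symm
      exact ⟨p.1, p.2, SL, SR, hsep, hU, hLA, hRB, hmin, rfl, hN1⟩
    · have hx2 : x ∈ p.2 := (sep_mem_or hsep x).resolve_left hx1
      have hsep' : IsSep G p.2 p.1 := isSep_symm hsep
      have hZ1 : ∀ z ∈ Z, z ∈ p.2 := by
        intro z hz
        obtain ⟨w, hw⟩ := (hZmem z).mp hz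
        refine walk_stay hsep' w (fun v hv hmem => (hw v hv) (hsepX ?_)) hx2
        rw [Finset.inter_comm]
        exact hmem
      have hN1 : ∀ v ∈ nbhdSet G Z, v ∈ p.2 := by
        intro v hv
        obtain ⟨hvZ, c, hc, hadj⟩ := hv
        by_contra hv1
        have hv2 : v ∈ p.1 := (sep_mem_or hsep v).resolve_right hv1
        have hc1 : c ∈ p.2 := hZ1 c hc
        have hc2 : c ∉ p.1 := fun h2 =>
          hZnX c hc (hsepX (Finset.mem_inter.mpr ⟨h2, hc1⟩))
        exact hsep'.2 c hc1 hc2 v hv2 hv1 hadj.symm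
      refine ⟨p.2, p.1, SR, SL, hsep', by rw [Finset.union_comm]; exact hU,
        hRB, hLA, ?_, Finset.inter_comm _ _, hN1⟩
      intro A' B' hs hR hL
      rw [Finset.inter_comm p.2 p.1, Finset.inter_comm A' B']
      exact hmin B' A' (isSep_symm hs) hL hR
  choose A B L R hsepI hUI hLAI hRBI hminI hABI hNI using key
  set Nf : Finset V := Finset.univ.filter (fun v => v ∈ nbhdSet G Z) with hNfdef
  have hNfmem : ∀ v, v ∈ Nf ↔ v ∈ nbhdSet G Z := by
    intro v; simp [hNfdef]
  have hNfA : ∀ i, Nf ⊆ A i := fun i v hv => hNI i v ((hNfmem v).mp hv)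
  obtain ⟨C', D', hsep1, hNC', hDD', hBD', hcard⟩ :=
    build_sep A B L R Nf 𝒮.attach
      (fun i _ => ⟨hsepI i, hLAI i, hRBI i, hminI i, hNfA i⟩)
      Finset.univ (𝒮.attach.sup R) (sep_univ _)
      (fun i hi => Finset.le_sup hi) (Finset.subset_univ _)
  rw [Finset.univ_inter] at hcard
  have hRS : 𝒮.attach.sup R ⊆ S :=
    Finset.sup_le fun i _ => (hUI i) ▸ Finset.subset_union_right
  have hNfsd : Nf \ D' ⊆ S \ 𝒮.attach.sup R := by
    intro v hv
    obtain ⟨hv1, hv2⟩ := Finset.mem_sdiff.mp hv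
    have hvN : v ∈ nbhdSet G Z := (hNfmem v).mp hv1
    have hvS : v ∈ S := by
      by_contra hvS
      have hvX := hNX v hvN
      have hvsup : v ∈ 𝒮.sup (fun p : Finset V × Finset V => p.1 ∩ p.2) :=
        (Finset.mem_union.mp hvX).resolve_left hvS
      obtain ⟨q, hq, hvq⟩ := Finset.mem_sup.mp hvsup
      have hvB : v ∈ B ⟨q, hq⟩ := by
        have hv' : v ∈ A ⟨q, hq⟩ ∩ B ⟨q, hq⟩ := by
          rw [hABI ⟨q, hq⟩]
          exact hvq
        exact (Finset.mem_inter.mp hv').2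
      exact hv2 (hBD' ⟨q, hq⟩ (Finset.mem_attach _ _) hvB)
    refine Finset.mem_sdiff.mpr ⟨hvS, fun h => hv2 (hDD' h)⟩
  have h1 : (Nf ∩ D').card ≤ (𝒮.attach.sup R).card := by
    refine le_trans (Finset.card_le_card ?_) hcard
    exact Finset.inter_subset_inter_right hNC'
  have h2 : (Nf \ D').card ≤ (S \ 𝒮.attach.sup R).card := Finset.card_le_card hNfsd
  have h3 : (S \ 𝒮.attach.sup R).card + (𝒮.attach.sup R).card = S.card :=
    Finset.card_sdiff_add_card_eq_card hRS
  have h4 : (Nf ∩ D').card + (Nf \ D').card = Nf.card :=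
    Finset.card_inter_add_card_sdiff Nf D'
  have hset : nbhdSet G Z = ↑Nf := by
    ext v
    rw [Finset.mem_coe, hNfmem]
  rw [hset, Set.ncard_coe_finset]
  omega
end

section
/- Let Λ be a finite label set and (G,ι), (G₁,ι₁), (G₂,ι₂) be Λ-boundaried graphs such that (G₁,ι₁) and (G₂,ι₂) have the same weak cut signature. Then for all vertex subsets X, Y ⊆ V(G), the minimum order of an X-Y separation in (G,ι) ⊕ (G₁,ι₁) equals the minimum order of an X-Y separation in (G,ι) ⊕ (G₂,ι₂). -/
open Finset

variable {V : Type*} [Fintype V] [DecidableEq V]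

section AuxWeakSig

variable {Λ : Type*} [Fintype Λ] [DecidableEq Λ]

/-- The boundary of a boundaried graph, as a finset. -/
noncomputable def bdrySet {V : Type*} [Fintype V] [DecidableEq V] (H : BGraph Λ V) :
    Finset V :=
  Finset.univ.filter (fun v => ∃ l, H.bd l = some v)

lemma weakSigLE_univ_univ {V : Type*} [Fintype V] [DecidableEq V] (H : BGraph Λ V) (n : ℕ) :
    WeakSigLE H Finset.univ Finset.univ n ↔ (bdrySet H).card ≤ n := by
  constructor
  · rintro ⟨A, B, _, hA, hB, hc⟩
    refine le_trans (Finset.card_le_card ?_) hc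
    intro v hv
    simp only [bdrySet, Finset.mem_filter] at hv
    obtain ⟨-, l, hl⟩ := hv
    exact Finset.mem_inter.2 ⟨hA l (Finset.mem_univ l) v hl, hB l (Finset.mem_univ l) v hl⟩
  · intro hc
    refine ⟨Finset.univ, bdrySet H, ⟨by simp, ?_⟩, ?_, ?_, ?_⟩
    · intro a _ _ b hb hbA
      exact absurd (Finset.mem_univ b) hbA
    · intro l _ v _; exact Finset.mem_univ v
    · intro l _ v hv
      simp only [bdrySet, Finset.mem_filter]
      exact ⟨Finset.mem_univ v, l, hv⟩
    · simpa using hc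

lemma weakSigLE_erase_none {V : Type*} [Fintype V] [DecidableEq V] (H : BGraph Λ V)
    {l : Λ} (hl : H.bd l = none) (n : ℕ) :
    WeakSigLE H Finset.univ (Finset.univ.erase l) n ↔ (bdrySet H).card ≤ n := by
  constructor
  · rintro ⟨A, B, _, hA, hB, hc⟩
    refine le_trans (Finset.card_le_card ?_) hc
    intro v hv
    simp only [bdrySet, Finset.mem_filter] at hv
    obtain ⟨-, l', hl'⟩ := hv
    have hne : l' ≠ l := by rintro rfl; rw [hl] at hl'; exact nomatch hl'
    exact Finset.mem_inter.2 ⟨hA l' (Finset.mem_univ l') v hl',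
      hB l' (Finset.mem_erase.2 ⟨hne, Finset.mem_univ l'⟩) v hl'⟩
  · intro hc
    refine ⟨Finset.univ, bdrySet H, ⟨by simp, ?_⟩, ?_, ?_, ?_⟩
    · intro a _ _ b hb hbA
      exact absurd (Finset.mem_univ b) hbA
    · intro l' _ v _; exact Finset.mem_univ v
    · intro l' _ v hv
      simp only [bdrySet, Finset.mem_filter]
      exact ⟨Finset.mem_univ v, l', hv⟩
    · simpa using hc

lemma weakSigLE_erase_some {V : Type*} [Fintype V] [DecidableEq V] (H : BGraph Λ V)
    {l : Λ} {w : V} (hl : H.bd l = some w) :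
    WeakSigLE H Finset.univ (Finset.univ.erase l) ((bdrySet H).card - 1) := by
  refine ⟨Finset.univ, (bdrySet H).erase w, ⟨by simp, ?_⟩, ?_, ?_, ?_⟩
  · intro a _ _ b hb hbA
    exact absurd (Finset.mem_univ b) hbA
  · intro l' _ v _; exact Finset.mem_univ v
  · intro l' hl' v hv
    have hne : l' ≠ l := (Finset.mem_erase.1 hl').1
    refine Finset.mem_erase.2 ⟨?_, ?_⟩
    · rintro rfl; exact hne (H.inj l' l v hv hl)
    · simp only [bdrySet, Finset.mem_filter]
      exact ⟨Finset.mem_univ v, l', hv⟩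
  · have hw : w ∈ bdrySet H := by
      simp only [bdrySet, Finset.mem_filter]; exact ⟨Finset.mem_univ w, l, hl⟩
    rw [Finset.univ_inter, Finset.card_erase_of_mem hw]

lemma sameWeakSig_dom {V₁ V₂ : Type*} [Fintype V₁] [DecidableEq V₁] [Fintype V₂]
    [DecidableEq V₂] {H₁ : BGraph Λ V₁} {H₂ : BGraph Λ V₂}
    (hsig : SameWeakSig H₁ H₂) (l : Λ) : (H₁.bd l = none) ↔ (H₂.bd l = none) := by
  have hcard : (bdrySet H₁).card = (bdrySet H₂).card := by
    have h1 := (hsig Finset.univ Finset.univ (by simp) (bdrySet H₁).card).mp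
      ((weakSigLE_univ_univ H₁ _).2 le_rfl)
    have h2 := (hsig Finset.univ Finset.univ (by simp) (bdrySet H₂).card).mpr
      ((weakSigLE_univ_univ H₂ _).2 le_rfl)
    exact le_antisymm ((weakSigLE_univ_univ H₁ _).1 h2) ((weakSigLE_univ_univ H₂ _).1 h1)
  constructor
  · intro h1
    by_contra h2
    obtain ⟨w, hw⟩ := Option.ne_none_iff_exists'.1 h2
    have h3 := (hsig Finset.univ (Finset.univ.erase l) (by simp) _).mpr
      (weakSigLE_erase_some H₂ hw)
    rw [weakSigLE_erase_none H₁ h1, hcard] at h3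
    have hpos : 0 < (bdrySet H₂).card := by
      refine Finset.card_pos.2 ⟨w, ?_⟩
      simp only [bdrySet, Finset.mem_filter]; exact ⟨Finset.mem_univ w, l, hw⟩
    omega
  · intro h2
    by_contra h1
    obtain ⟨w, hw⟩ := Option.ne_none_iff_exists'.1 h1
    have h3 := (hsig Finset.univ (Finset.univ.erase l) (by simp) _).mp
      (weakSigLE_erase_some H₁ hw)
    rw [weakSigLE_erase_none H₂ h2, ← hcard] at h3
    have hpos : 0 < (bdrySet H₁).card := by
      refine Finset.card_pos.2 ⟨w, ?_⟩
      simp only [bdrySet, Finset.mem_filter]; exact ⟨Finset.mem_univ w, l, hw⟩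
    omega

end AuxWeakSig

lemma glue_sep_transfer {Λ : Type*} [Fintype Λ] [DecidableEq Λ]
    {V₀ V₁ V₂ W₁ W₂ : Type*} [Fintype V₀] [DecidableEq V₀] [Fintype V₁] [DecidableEq V₁]
    [Fintype V₂] [DecidableEq V₂] [Fintype W₁] [DecidableEq W₁]
    [Fintype W₂] [DecidableEq W₂]
    (H : BGraph Λ V₀) (H₁ : BGraph Λ V₁) (H₂ : BGraph Λ V₂)
    (hsig : SameWeakSig H₁ H₂)
    (K₁ : SimpleGraph W₁) (f₁ : V₀ → W₁) (g₁ : V₁ → W₁) (hK₁ : IsGluing H H₁ K₁ f₁ g₁)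
    (K₂ : SimpleGraph W₂) (f₂ : V₀ → W₂) (g₂ : V₂ → W₂) (hK₂ : IsGluing H H₂ K₂ f₂ g₂)
    (X Y : Finset V₀) (n : ℕ)
    (h : ∃ A B : Finset W₁, IsSep K₁ A B ∧ (∀ x ∈ X, f₁ x ∈ A) ∧ (∀ y ∈ Y, f₁ y ∈ B) ∧
      (A ∩ B).card ≤ n) :
    ∃ A B : Finset W₂, IsSep K₂ A B ∧ (∀ x ∈ X, f₂ x ∈ A) ∧ (∀ y ∈ Y, f₂ y ∈ B) ∧
      (A ∩ B).card ≤ n := by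
  classical
  obtain ⟨A, B, ⟨hABu, hABe⟩, hXA, hYB, hn⟩ := h
  obtain ⟨hf₁i, hg₁i, hcov₁, hid₁, hadj₁⟩ := hK₁
  obtain ⟨hf₂i, hg₂i, hcov₂, hid₂, hadj₂⟩ := hK₂
  have hdom := fun l => sameWeakSig_dom hsig l
  have hABu' : ∀ w : W₁, w ∈ A ∨ w ∈ B := by
    intro w
    have := Finset.mem_univ w
    rw [← hABu] at this
    exact Finset.mem_union.1 this
  set A₁ : Finset V₁ := Finset.univ.filter (fun v => g₁ v ∈ A) with hA₁def
  set B₁ : Finset V₁ := Finset.univ.filter (fun v => g₁ v ∈ B) with hB₁def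
  set LA : Finset Λ := Finset.univ.filter (fun l =>
    (∀ a, H.bd l = some a → f₁ a ∈ A) ∧
    (H.bd l = none → ∀ v, H₁.bd l = some v → g₁ v ∈ A)) with hLAdef
  set LB : Finset Λ := Finset.univ.filter (fun l =>
    (∀ a, H.bd l = some a → f₁ a ∈ B) ∧
    (H.bd l = none → ∀ v, H₁.bd l = some v → g₁ v ∈ B)) with hLBdef
  have hLAB : LA ∪ LB = Finset.univ := by
    apply Finset.eq_univ_of_forall
    intro l
    rw [Finset.mem_union, hLAdef, hLBdef, Finset.mem_filter, Finset.mem_filter]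
    cases hbd : H.bd l with
    | some a =>
      rcases hABu' (f₁ a) with hm | hm
      · exact Or.inl ⟨Finset.mem_univ l,
          fun a' ha' => by injection ha' with h'; subst h'; exact hm,
          fun hn' => nomatch hn'⟩
      · exact Or.inr ⟨Finset.mem_univ l,
          fun a' ha' => by injection ha' with h'; subst h'; exact hm,
          fun hn' => nomatch hn'⟩
    | none =>
      cases hbd1 : H₁.bd l with
      | some v =>
        rcases hABu' (g₁ v) with hm | hm
        · exact Or.inl ⟨Finset.mem_univ l,
            fun a' ha' => by simp at ha',
            fun _ v' hv' => by injection hv' with h'; subst h'; exact hm⟩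
        · exact Or.inr ⟨Finset.mem_univ l,
            fun a' ha' => by simp at ha',
            fun _ v' hv' => by injection hv' with h'; subst h'; exact hm⟩
      | none =>
        exact Or.inl ⟨Finset.mem_univ l,
          fun a' ha' => by simp at ha',
          fun _ v' hv' => by simp at hv'⟩
  have hsep₁ : IsSep H₁.G A₁ B₁ := by
    constructor
    · apply Finset.eq_univ_of_forall
      intro v
      rcases hABu' (g₁ v) with hm | hm
      · exact Finset.mem_union.2 (Or.inl (Finset.mem_filter.2 ⟨Finset.mem_univ v, hm⟩))
      · exact Finset.mem_union.2 (Or.inr (Finset.mem_filter.2 ⟨Finset.mem_univ v, hm⟩))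
    · intro a ha haB b hb hbA hadj
      have h1 : g₁ a ∈ A := (Finset.mem_filter.1 ha).2
      have h2 : g₁ a ∉ B := fun hc => haB (Finset.mem_filter.2 ⟨Finset.mem_univ a, hc⟩)
      have h3 : g₁ b ∈ B := (Finset.mem_filter.1 hb).2
      have h4 : g₁ b ∉ A := fun hc => hbA (Finset.mem_filter.2 ⟨Finset.mem_univ b, hc⟩)
      exact hABe _ h1 h2 _ h3 h4 ((hadj₁ _ _).2 (Or.inr ⟨a, b, rfl, rfl, hadj⟩))
  have hw1 : WeakSigLE H₁ LA LB (A₁ ∩ B₁).card := by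
    refine ⟨A₁, B₁, hsep₁, ?_, ?_, le_rfl⟩
    · intro l hl v hv
      have hp := (Finset.mem_filter.1 hl).2
      refine Finset.mem_filter.2 ⟨Finset.mem_univ v, ?_⟩
      cases hbd : H.bd l with
      | some a =>
        have he : f₁ a = g₁ v := (hid₁ a v).2 ⟨l, hbd, hv⟩
        rw [← he]
        exact hp.1 a hbd
      | none => exact hp.2 hbd v hv
    · intro l hl v hv
      have hp := (Finset.mem_filter.1 hl).2
      refine Finset.mem_filter.2 ⟨Finset.mem_univ v, ?_⟩
      cases hbd : H.bd l with
      | some a =>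
        have he : f₁ a = g₁ v := (hid₁ a v).2 ⟨l, hbd, hv⟩
        rw [← he]
        exact hp.1 a hbd
      | none => exact hp.2 hbd v hv
  obtain ⟨A₂, B₂, hsep₂, hLA₂, hLB₂, hc₂⟩ := (hsig LA LB hLAB _).1 hw1
  set A' : Finset W₂ := Finset.univ.filter
    (fun w => (∃ a, f₂ a = w ∧ f₁ a ∈ A) ∨ ∃ c, g₂ c = w ∧ c ∈ A₂) with hA'def
  set B' : Finset W₂ := Finset.univ.filter
    (fun w => (∃ a, f₂ a = w ∧ f₁ a ∈ B) ∨ ∃ c, g₂ c = w ∧ c ∈ B₂) with hB'def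
  have hF1A : ∀ c, g₂ c ∈ A' ↔ c ∈ A₂ := by
    intro c
    rw [hA'def, Finset.mem_filter]
    constructor
    · rintro ⟨-, ⟨a, ha, haA⟩ | ⟨c', hc', hc'2⟩⟩
      · obtain ⟨l, hbl, hb2⟩ := (hid₂ a c).1 ha
        have hlA : l ∈ LA := by
          refine Finset.mem_filter.2 ⟨Finset.mem_univ l, ?_, ?_⟩
          · intro a' ha'
            rw [hbl, Option.some.injEq] at ha'; subst ha'; exact haA
          · intro hn'; rw [hbl] at hn'; exact nomatch hn'
        exact hLA₂ l hlA c hb2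
      · have := hg₂i hc'; subst this; exact hc'2
    · intro hc; exact ⟨Finset.mem_univ _, Or.inr ⟨c, rfl, hc⟩⟩
  have hF1B : ∀ c, g₂ c ∈ B' ↔ c ∈ B₂ := by
    intro c
    rw [hB'def, Finset.mem_filter]
    constructor
    · rintro ⟨-, ⟨a, ha, haA⟩ | ⟨c', hc', hc'2⟩⟩
      · obtain ⟨l, hbl, hb2⟩ := (hid₂ a c).1 ha
        have hlA : l ∈ LB := by
          refine Finset.mem_filter.2 ⟨Finset.mem_univ l, ?_, ?_⟩
          · intro a' ha'
            rw [hbl, Option.some.injEq] at ha'; subst ha'; exact haA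
          · intro hn'; rw [hbl] at hn'; exact nomatch hn'
        exact hLB₂ l hlA c hb2
      · have := hg₂i hc'; subst this; exact hc'2
    · intro hc; exact ⟨Finset.mem_univ _, Or.inr ⟨c, rfl, hc⟩⟩
  have hmemA' : ∀ a, f₁ a ∈ A → f₂ a ∈ A' := fun a ha =>
    Finset.mem_filter.2 ⟨Finset.mem_univ _, Or.inl ⟨a, rfl, ha⟩⟩
  have hmemB' : ∀ a, f₁ a ∈ B → f₂ a ∈ B' := fun a ha =>
    Finset.mem_filter.2 ⟨Finset.mem_univ _, Or.inl ⟨a, rfl, ha⟩⟩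
  have hF2A : ∀ a, f₂ a ∈ A' → f₂ a ∉ B' → f₁ a ∈ A ∧ f₁ a ∉ B := by
    intro a _ hnB
    have hB : f₁ a ∉ B := fun hc => hnB (hmemB' a hc)
    exact ⟨(hABu' (f₁ a)).resolve_right hB, hB⟩
  have hF2B : ∀ a, f₂ a ∈ B' → f₂ a ∉ A' → f₁ a ∈ B ∧ f₁ a ∉ A := by
    intro a _ hnA
    have hA : f₁ a ∉ A := fun hc => hnA (hmemA' a hc)
    exact ⟨(hABu' (f₁ a)).resolve_left hA, hA⟩
  have hsep' : IsSep K₂ A' B' := by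
    constructor
    · apply Finset.eq_univ_of_forall
      intro w
      rcases hcov₂ w with ⟨a, rfl⟩ | ⟨c, rfl⟩
      · rcases hABu' (f₁ a) with hm | hm
        · exact Finset.mem_union.2 (Or.inl (hmemA' a hm))
        · exact Finset.mem_union.2 (Or.inr (hmemB' a hm))
      · have hc : c ∈ A₂ ∪ B₂ := by rw [hsep₂.1]; exact Finset.mem_univ c
        rcases Finset.mem_union.1 hc with hm | hm
        · exact Finset.mem_union.2 (Or.inl ((hF1A c).2 hm))
        · exact Finset.mem_union.2 (Or.inr ((hF1B c).2 hm))
    · intro x hx hxB y hy hyA hadj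
      rcases (hadj₂ x y).1 hadj with ⟨a, b, rfl, rfl, hab⟩ | ⟨c, d, rfl, rfl, hcd⟩
      · obtain ⟨h1, h2⟩ := hF2A a hx hxB
        obtain ⟨h3, h4⟩ := hF2B b hy hyA
        exact hABe _ h1 h2 _ h3 h4 ((hadj₁ _ _).2 (Or.inl ⟨a, b, rfl, rfl, hab⟩))
      · have h1 : c ∈ A₂ := (hF1A c).1 hx
        have h2 : c ∉ B₂ := fun hc => hxB ((hF1B c).2 hc)
        have h3 : d ∈ B₂ := (hF1B d).1 hy
        have h4 : d ∉ A₂ := fun hc => hyA ((hF1A d).2 hc)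
        exact hsep₂.2 c h1 h2 d h3 h4 hcd
  refine ⟨A', B', hsep', fun x hx => hmemA' x (hXA x hx), fun y hy => hmemB' y (hYB y hy), ?_⟩
  set S : Finset V₀ := Finset.univ.filter
    (fun a => f₂ a ∈ A' ∧ f₂ a ∈ B' ∧ ∀ c, g₂ c ≠ f₂ a) with hSdef
  have hsub1 : A' ∩ B' ⊆ (A₂ ∩ B₂).image g₂ ∪ S.image f₂ := by
    intro w hw
    obtain ⟨hwA, hwB⟩ := Finset.mem_inter.1 hw
    by_cases hr : ∃ c, g₂ c = w
    · obtain ⟨c, rfl⟩ := hr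
      exact Finset.mem_union.2 (Or.inl (Finset.mem_image.2
        ⟨c, Finset.mem_inter.2 ⟨(hF1A c).1 hwA, (hF1B c).1 hwB⟩, rfl⟩))
    · rcases hcov₂ w with ⟨a, rfl⟩ | hc
      · push_neg at hr
        exact Finset.mem_union.2 (Or.inr (Finset.mem_image.2
          ⟨a, Finset.mem_filter.2 ⟨Finset.mem_univ a, hwA, hwB, hr⟩, rfl⟩))
      · exact absurd hc hr
  have hsub2 : (A₁ ∩ B₁).image g₁ ∪ S.image f₁ ⊆ A ∩ B := by
    intro w hw
    rcases Finset.mem_union.1 hw with hm | hm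
    · obtain ⟨v, hv, rfl⟩ := Finset.mem_image.1 hm
      obtain ⟨h1, h2⟩ := Finset.mem_inter.1 hv
      exact Finset.mem_inter.2 ⟨(Finset.mem_filter.1 h1).2, (Finset.mem_filter.1 h2).2⟩
    · obtain ⟨a, ha, rfl⟩ := Finset.mem_image.1 hm
      obtain ⟨-, hA', hB', hng⟩ := Finset.mem_filter.1 ha
      have h1 : f₁ a ∈ A := by
        rcases (Finset.mem_filter.1 hA').2 with ⟨a', ha', hm'⟩ | ⟨c, hc, -⟩
        · rwa [hf₂i ha'] at hm'
        · exact absurd hc (hng c)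
      have h2 : f₁ a ∈ B := by
        rcases (Finset.mem_filter.1 hB').2 with ⟨a', ha', hm'⟩ | ⟨c, hc, -⟩
        · rwa [hf₂i ha'] at hm'
        · exact absurd hc (hng c)
      exact Finset.mem_inter.2 ⟨h1, h2⟩
  have hdisj : Disjoint ((A₁ ∩ B₁).image g₁) (S.image f₁) := by
    rw [Finset.disjoint_left]
    intro w hw1 hw2
    obtain ⟨v, -, rfl⟩ := Finset.mem_image.1 hw1
    obtain ⟨a, ha, hfa⟩ := Finset.mem_image.1 hw2
    obtain ⟨l, hbl, hb1⟩ := (hid₁ a v).1 hfa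
    have h2 : H₂.bd l ≠ none := by
      intro hc
      have hc' := (hdom l).2 hc
      rw [hc'] at hb1
      exact nomatch hb1
    obtain ⟨c, hcbd⟩ := Option.ne_none_iff_exists'.1 h2
    have he : f₂ a = g₂ c := (hid₂ a c).2 ⟨l, hbl, hcbd⟩
    exact (Finset.mem_filter.1 ha).2.2.2 c he.symm
  calc (A' ∩ B').card
      ≤ ((A₂ ∩ B₂).image g₂ ∪ S.image f₂).card := Finset.card_le_card hsub1
    _ ≤ ((A₂ ∩ B₂).image g₂).card + (S.image f₂).card := Finset.card_union_le _ _
    _ ≤ (A₂ ∩ B₂).card + S.card :=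
        add_le_add Finset.card_image_le (le_of_eq (Finset.card_image_of_injective _ hf₂i))
    _ ≤ (A₁ ∩ B₁).card + S.card := Nat.add_le_add_right hc₂ _
    _ = ((A₁ ∩ B₁).image g₁).card + (S.image f₁).card := by
        rw [Finset.card_image_of_injective _ hg₁i, Finset.card_image_of_injective _ hf₁i]
    _ = ((A₁ ∩ B₁).image g₁ ∪ S.image f₁).card := (Finset.card_union_of_disjoint hdisj).symm
    _ ≤ (A ∩ B).card := Finset.card_le_card hsub2
    _ ≤ n := hn

/-- if `(G₁,ι₁)` and `(G₂,ι₂)` have the same weak cut signature, then for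
all `X, Y ⊆ V(G)`, the minimum order of an `X`-`Y` separation in `(G,ι) ⊕ (G₁,ι₁)`
equals the minimum order of an `X`-`Y` separation in `(G,ι) ⊕ (G₂,ι₂)`. -/
theorem same_weak_sig_same_min_sep {Λ : Type*} [Fintype Λ] [DecidableEq Λ]
    {V₀ V₁ V₂ W₁ W₂ : Type*} [Fintype V₀] [DecidableEq V₀] [Fintype V₁] [DecidableEq V₁]
    [Fintype V₂] [DecidableEq V₂] [Fintype W₁] [DecidableEq W₁]
    [Fintype W₂] [DecidableEq W₂]
    (H : BGraph Λ V₀) (H₁ : BGraph Λ V₁) (H₂ : BGraph Λ V₂)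
    (hsig : SameWeakSig H₁ H₂)
    (K₁ : SimpleGraph W₁) (f₁ : V₀ → W₁) (g₁ : V₁ → W₁) (hK₁ : IsGluing H H₁ K₁ f₁ g₁)
    (K₂ : SimpleGraph W₂) (f₂ : V₀ → W₂) (g₂ : V₂ → W₂) (hK₂ : IsGluing H H₂ K₂ f₂ g₂)
    (X Y : Finset V₀) (n : ℕ) :
    (∃ A B : Finset W₁, IsSep K₁ A B ∧ (∀ x ∈ X, f₁ x ∈ A) ∧ (∀ y ∈ Y, f₁ y ∈ B) ∧
      (A ∩ B).card ≤ n) ↔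
    (∃ A B : Finset W₂, IsSep K₂ A B ∧ (∀ x ∈ X, f₂ x ∈ A) ∧ (∀ y ∈ Y, f₂ y ∈ B) ∧
      (A ∩ B).card ≤ n) := by
  constructor
  · exact glue_sep_transfer H H₁ H₂ hsig K₁ f₁ g₁ hK₁ K₂ f₂ g₂ hK₂ X Y n
  · exact glue_sep_transfer H H₂ H₁ (fun A' B' hu m => (hsig A' B' hu m).symm)
      K₂ f₂ g₂ hK₂ K₁ f₁ g₁ hK₁ X Y n
end
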